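/- arXiv:2312.10413 — 3 statements merged into one kernel-verified Lean document; each statement's English description precedes it below -/
import Mathlib

section
/- Let k >= 2 and let d be an integer with 2k <= d <= 3k - 1 and d != 5. Then the degree sequence (d^{2k}, (4k-1-d)^{2k}) is not forcibly self-complementary; that is, there exists a graph on 4k vertices with 2k vertices of degree d and 2k vertices of degree 4k-1-d that is not self-complementary. -/
open SimpleGraph

/-- The degree of a vertex, as the cardinality of its neighbor set. -/
noncomputable def deg {V : Type*} (G : SimpleGraph V) (v : V) : ℕ := (G.neighborSet v).ncard

/-- The degree sequence of a finite graph, as a multiset (which determines the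
non-increasing sequence of vertex degrees). -/
noncomputable def degMultiset {V : Type*} [Finite V] (G : SimpleGraph V) : Multiset ℕ :=
  letI := Fintype.ofFinite V
  Finset.univ.val.map fun v => deg G v

/-- A graph is self-complementary if it is isomorphic to its complement. -/
def IsSelfCompl {V : Type*} (G : SimpleGraph V) : Prop := Nonempty (G ≃g Gᶜ)

/-- A degree sequence is forcibly self-complementary if every realization of it
is self-complementary. -/
def ForciblySC (τ : Multiset ℕ) : Prop :=
  ∀ G : SimpleGraph (Fin (Multiset.card τ)), degMultiset G = τ → IsSelfCompl G

open Finset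


lemma not_isSelfCompl_of_twins {V : Type*} (G : SimpleGraph V) (u v : V)
    (huv : G.Adj u v)
    (hct : ∀ w, w ≠ u → w ≠ v → (G.Adj u w ↔ G.Adj v w))
    (hno : ∀ a b, a ≠ b → ¬ G.Adj a b → ∃ w, ¬ (G.Adj a w ↔ G.Adj b w)) :
    ¬ IsSelfCompl G := by
  rintro ⟨φ⟩
  have hmap : ∀ x y, G.Adj x y ↔ Gᶜ.Adj (φ x) (φ y) := fun x y => (φ.map_adj_iff).symm
  have hab : Gᶜ.Adj (φ u) (φ v) := (hmap u v).mp huv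
  have hane : φ u ≠ φ v := hab.ne
  have hnab : ¬ G.Adj (φ u) (φ v) := ((G.compl_adj _ _).mp hab).2
  obtain ⟨w, hw⟩ := hno (φ u) (φ v) hane hnab
  apply hw
  by_cases hwa : w = φ u
  · rw [hwa]
    exact iff_of_false (G.irrefl) (fun h => hnab h.symm)
  by_cases hwb : w = φ v
  · rw [hwb]
    exact iff_of_false hnab (G.irrefl)
  · have hwz : w = φ (φ.symm w) := by simp
    set z := φ.symm w with hz
    have hzu : z ≠ u := fun h => hwa (by rw [hwz, h])
    have hzv : z ≠ v := fun h => hwb (by rw [hwz, h])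
    have key : ∀ x : V, φ x ≠ w → (G.Adj (φ x) w ↔ ¬ G.Adj x z) := by
      intro x hne
      rw [hwz]
      constructor
      · intro h hc
        exact ((G.compl_adj _ _).mp ((hmap x z).mp hc)).2 h
      · intro h
        by_contra hc
        exact h ((hmap x z).mpr ((G.compl_adj _ _).mpr ⟨fun hh => hne (by rw [hh, ← hwz]), hc⟩))
    rw [key u (fun h => hwa h.symm), key v (fun h => hwb h.symm), hct z hzu hzv]

lemma card_fin_filter (n : ℕ) (P : ℕ → Prop) [DecidablePred P] :
    (Finset.univ.filter (fun w : Fin n => P w.val)).card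
      = ((Finset.range n).filter P).card := by
  have h : ((Finset.range n).filter P)
      = (Finset.univ.filter (fun w : Fin n => P w.val)).image Fin.val := by
    ext j
    simp only [mem_filter, mem_range, mem_image, mem_univ, true_and]
    constructor
    · rintro ⟨hj, hp⟩; exact ⟨⟨j, hj⟩, hp, rfl⟩
    · rintro ⟨w, hp, rfl⟩; exact ⟨w.isLt, hp⟩
  rw [h, Finset.card_image_of_injective _ Fin.val_injective]


lemma degMultiset_eq (k dd ee : ℕ) (hk : 0 < k) (G : SimpleGraph (Fin (4*k)))
    (h : ∀ v : Fin (4*k), deg G v = if v.val < 2*k then dd else ee) :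
    degMultiset G = Multiset.replicate (2*k) dd + Multiset.replicate (2*k) ee := by
  classical
  have hinst : (Fintype.ofFinite (Fin (4*k))) = Fin.fintype (4*k) := Subsingleton.elim _ _
  rw [degMultiset, hinst]
  have hsplit : (Finset.univ : Finset (Fin (4*k))).val
      = Multiset.filter (fun v : Fin (4*k) => v.val < 2*k) Finset.univ.val
        + Multiset.filter (fun v : Fin (4*k) => ¬ v.val < 2*k) Finset.univ.val :=
    (Multiset.filter_add_not _ _).symm
  rw [hsplit, Multiset.map_add]
  congr 1
  · have h1 : Multiset.map (fun v => deg G v)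
        (Multiset.filter (fun v : Fin (4*k) => v.val < 2*k) Finset.univ.val)
        = Multiset.map (fun _ => dd)
        (Multiset.filter (fun v : Fin (4*k) => v.val < 2*k) Finset.univ.val) := by
      apply Multiset.map_congr rfl
      intro v hv
      rw [Multiset.mem_filter] at hv
      rw [h v, if_pos hv.2]
    rw [h1, Multiset.map_const']
    congr 1
    have : Multiset.filter (fun v : Fin (4*k) => v.val < 2*k) Finset.univ.val
        = (Finset.univ.filter (fun v : Fin (4*k) => v.val < 2*k)).val := rfl
    rw [this]
    have := card_fin_filter (4*k) (fun j => j < 2*k)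
    rw [Finset.card_def] at this
    rw [this]
    have : (Finset.range (4*k)).filter (fun j => j < 2*k) = Finset.range (2*k) := by
      ext j; simp only [mem_filter, mem_range]; omega
    rw [this, Finset.card_range]
  · have h1 : Multiset.map (fun v => deg G v)
        (Multiset.filter (fun v : Fin (4*k) => ¬ v.val < 2*k) Finset.univ.val)
        = Multiset.map (fun _ => ee)
        (Multiset.filter (fun v : Fin (4*k) => ¬ v.val < 2*k) Finset.univ.val) := by
      apply Multiset.map_congr rfl
      intro v hv
      rw [Multiset.mem_filter] at hv
      rw [h v, if_neg hv.2]
    rw [h1, Multiset.map_const']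
    congr 1
    have : Multiset.filter (fun v : Fin (4*k) => ¬ v.val < 2*k) Finset.univ.val
        = (Finset.univ.filter (fun v : Fin (4*k) => ¬ v.val < 2*k)).val := rfl
    rw [this]
    have := card_fin_filter (4*k) (fun j => ¬ j < 2*k)
    rw [Finset.card_def] at this
    rw [this]
    have : (Finset.range (4*k)).filter (fun j => ¬ j < 2*k) = Finset.Ico (2*k) (4*k) := by
      ext j; simp only [mem_filter, mem_range, mem_Ico]; omega
    rw [this, Nat.card_Ico]
    omega


-- Construction 1 : for k ≥ 3, 1 ≤ t ≤ k-1.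
-- L = vals [0,2k) : complete graph; R = vals [2k,4k) ; cross and hadj as below.

def xbase (k t a j : ℕ) : Prop := (a ≤ j ∧ j ≤ a + t) ∨ (j + 2*k ≤ a + t)
def xpert (t a j : ℕ) : Prop := (a = 0 ∨ a = 2) ∧ (j = 0 ∨ j = t + 1)
def xcross (k t a j : ℕ) : Prop :=
  (xbase k t a j ∧ ¬ xpert t a j) ∨ (xpert t a j ∧ ¬ xbase k t a j)
def hadj (k t x y : ℕ) : Prop :=
  x ≠ y ∧ (x + t < y ∨ y + t < x) ∧ x + t < y + 2*k ∧ y + t < x + 2*k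
    ∧ x + k ≠ y ∧ y + k ≠ x

instance (k t a j : ℕ) : Decidable (xcross k t a j) := by
  unfold xcross xbase xpert; infer_instance
instance (k t x y : ℕ) : Decidable (hadj k t x y) := by
  unfold hadj; infer_instance

def valAdj (k t a b : ℕ) : Prop :=
  (a < 2*k ∧ b < 2*k ∧ a ≠ b) ∨
  (a < 2*k ∧ 2*k ≤ b ∧ xcross k t a (b - 2*k)) ∨
  (b < 2*k ∧ 2*k ≤ a ∧ xcross k t b (a - 2*k)) ∨
  (2*k ≤ a ∧ 2*k ≤ b ∧ hadj k t (a - 2*k) (b - 2*k))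

instance (k t a b : ℕ) : Decidable (valAdj k t a b) := by
  unfold valAdj; infer_instance

lemma valAdj_LL {k t a b : ℕ} (ha : a < 2*k) (hb : b < 2*k) :
    valAdj k t a b ↔ a ≠ b := by
  unfold valAdj
  constructor
  · rintro (⟨_,_,h⟩|⟨_,h,_⟩|⟨_,h,_⟩|⟨h,_,_⟩) <;> omega
  · intro h; exact Or.inl ⟨ha, hb, h⟩

lemma valAdj_LR {k t a b : ℕ} (ha : a < 2*k) (hb : 2*k ≤ b) :
    valAdj k t a b ↔ xcross k t a (b - 2*k) := by
  unfold valAdj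
  constructor
  · rintro (⟨_,h,_⟩|⟨_,_,h⟩|⟨h,_,_⟩|⟨h,_,_⟩) <;> first | exact h | omega
  · intro h; exact Or.inr (Or.inl ⟨ha, hb, h⟩)

lemma valAdj_RL {k t a b : ℕ} (ha : 2*k ≤ a) (hb : b < 2*k) :
    valAdj k t a b ↔ xcross k t b (a - 2*k) := by
  unfold valAdj
  constructor
  · rintro (⟨h,_,_⟩|⟨h,_,_⟩|⟨_,_,h⟩|⟨_,h,_⟩) <;> first | exact h | omega
  · intro h; exact Or.inr (Or.inr (Or.inl ⟨hb, ha, h⟩))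

lemma valAdj_RR {k t a b : ℕ} (ha : 2*k ≤ a) (hb : 2*k ≤ b) :
    valAdj k t a b ↔ hadj k t (a - 2*k) (b - 2*k) := by
  unfold valAdj
  constructor
  · rintro (⟨h,_,_⟩|⟨h,_,_⟩|⟨_,h,_⟩|⟨_,_,h⟩) <;> first | exact h | omega
  · intro h; exact Or.inr (Or.inr (Or.inr ⟨ha, hb, h⟩))

lemma hadj_symm {k t x y : ℕ} (h : hadj k t x y) : hadj k t y x := by
  unfold hadj at *; omega

lemma valAdj_symm {k t a b : ℕ} (h : valAdj k t a b) : valAdj k t b a := by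
  unfold valAdj at *
  rcases h with ⟨h1,h2,h3⟩|⟨h1,h2,h3⟩|⟨h1,h2,h3⟩|⟨h1,h2,h3⟩
  · exact Or.inl ⟨h2, h1, fun hh => h3 hh.symm⟩
  · exact Or.inr (Or.inr (Or.inl ⟨h1, h2, h3⟩))
  · exact Or.inr (Or.inl ⟨h1, h2, h3⟩)
  · exact Or.inr (Or.inr (Or.inr ⟨h2, h1, hadj_symm h3⟩))

lemma valAdj_irrefl {k t a : ℕ} : ¬ valAdj k t a a := by
  unfold valAdj hadj
  rintro (⟨_,_,h⟩|⟨h1,h2,_⟩|⟨h1,h2,_⟩|⟨_,_,h,_⟩) <;> omega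

def G1 (k t : ℕ) : SimpleGraph (Fin (4*k)) where
  Adj v w := valAdj k t v.val w.val
  symm := ⟨fun v w h => valAdj_symm h⟩
  loopless := ⟨fun v h => valAdj_irrefl h⟩

instance (k t : ℕ) : DecidableRel (G1 k t).Adj := fun v w => by
  unfold G1; infer_instance

section counts
variable {k t : ℕ} (hk : 3 ≤ k) (ht1 : 1 ≤ t) (ht2 : t + 1 ≤ k)

include hk ht1 ht2

lemma rowcount (a : ℕ) (ha : a < 2*k) :
    (((Finset.range (2*k)).filter (fun j => xcross k t a j)).card) = t + 1 := by
  by_cases ha0 : a = 0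
  · subst ha0
    have hfe : (Finset.range (2*k)).filter (fun j => xcross k t 0 j)
        = Finset.Icc 1 (t+1) := by
      ext j
      simp only [mem_filter, mem_range, mem_Icc]
      unfold xcross xbase xpert
      omega
    rw [hfe, Nat.card_Icc]
    omega
  by_cases ha2 : a = 2
  · subst ha2
    have hfe : (Finset.range (2*k)).filter (fun j => xcross k t 2 j)
        = insert 0 (insert (t+2) (Finset.Ico 2 (t+1))) := by
      ext j
      simp only [mem_filter, mem_range, mem_insert, mem_Ico]
      unfold xcross xbase xpert
      omega
    rw [hfe]
    rw [Finset.card_insert_of_notMem (by simp only [mem_insert, mem_Ico]; omega),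
        Finset.card_insert_of_notMem (by simp only [mem_Ico]; omega), Nat.card_Ico]
    omega
  · -- generic row
    by_cases hw : a + t < 2*k
    · have hfe : (Finset.range (2*k)).filter (fun j => xcross k t a j)
          = Finset.Icc a (a+t) := by
        ext j
        simp only [mem_filter, mem_range, mem_Icc]
        unfold xcross xbase xpert
        omega
      rw [hfe, Nat.card_Icc]; omega
    · have hfe : (Finset.range (2*k)).filter (fun j => xcross k t a j)
          = (Finset.Ico a (2*k)) ∪ Finset.range (a + t + 1 - 2*k) := by
        ext j
        simp only [mem_filter, mem_range, mem_union, mem_Ico]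
        unfold xcross xbase xpert
        omega
      rw [hfe, Finset.card_union_of_disjoint, Nat.card_Ico, Finset.card_range]
      · omega
      · rw [Finset.disjoint_left]
        intro j hj hj2
        simp only [mem_Ico] at hj
        simp only [mem_range] at hj2
        omega

lemma colcount (x : ℕ) (hx : x < 2*k) :
    (((Finset.range (2*k)).filter (fun i => xcross k t i x)).card) = t + 1 := by
  by_cases hx0 : x = 0
  · subst hx0
    have hfe : (Finset.range (2*k)).filter (fun i => xcross k t i 0)
        = insert 2 (Finset.Ico (2*k - t) (2*k)) := by
      ext i
      simp only [mem_filter, mem_range, mem_insert, mem_Ico]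
      unfold xcross xbase xpert
      omega
    rw [hfe, Finset.card_insert_of_notMem (by simp only [mem_Ico]; omega), Nat.card_Ico]
    omega
  by_cases hxt : x = t + 1
  · subst hxt
    have hfe : (Finset.range (2*k)).filter (fun i => xcross k t i (t+1))
        = (Finset.range (t+2)).erase 2 := by
      ext i
      simp only [mem_filter, mem_range, mem_erase]
      unfold xcross xbase xpert
      omega
    rw [hfe, Finset.card_erase_of_mem (by simp only [mem_range]; omega), Finset.card_range]
    omega
  · by_cases hw : t ≤ x
    · have hfe : (Finset.range (2*k)).filter (fun i => xcross k t i x)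
          = Finset.Icc (x - t) x := by
        ext i
        simp only [mem_filter, mem_range, mem_Icc]
        unfold xcross xbase xpert
        omega
      rw [hfe, Nat.card_Icc]; omega
    · have hfe : (Finset.range (2*k)).filter (fun i => xcross k t i x)
          = Finset.range (x+1) ∪ Finset.Ico (2*k + x - t) (2*k) := by
        ext i
        simp only [mem_filter, mem_range, mem_union, mem_Ico]
        unfold xcross xbase xpert
        omega
      rw [hfe, Finset.card_union_of_disjoint, Nat.card_Ico, Finset.card_range]
      · omega
      · rw [Finset.disjoint_left]
        intro j hj hj2
        simp only [mem_range] at hj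
        simp only [mem_Ico] at hj2
        omega

lemma hcount (x : ℕ) (hx : x < 2*k) :
    (((Finset.range (2*k)).filter (fun y => hadj k t x y)).card) = 2*k - 2 - 2*t := by
  have hco := Finset.card_filter_add_card_filter_not
    (s := Finset.range (2*k)) (p := fun y => hadj k t x y)
  have hneg : ((Finset.range (2*k)).filter (fun y => ¬ hadj k t x y)).card = 2*t + 2 := by
    by_cases h1 : t ≤ x ∧ x + t < 2*k
    · set e := if x < k then x + k else x - k with he
      have hfe : (Finset.range (2*k)).filter (fun y => ¬ hadj k t x y)
          = insert e (Finset.Icc (x - t) (x + t)) := by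
        ext y
        simp only [mem_filter, mem_range, mem_insert, mem_Icc]
        unfold hadj
        rw [he]
        split_ifs <;> omega
      rw [hfe, Finset.card_insert_of_notMem
        (by simp only [mem_Icc]; rw [he]; split_ifs <;> omega), Nat.card_Icc]
      omega
    by_cases h2 : x < t
    · have hfe : (Finset.range (2*k)).filter (fun y => ¬ hadj k t x y)
          = insert (x + k) (Finset.range (x + t + 1) ∪ Finset.Ico (2*k + x - t) (2*k)) := by
        ext y
        simp only [mem_filter, mem_range, mem_insert, mem_union, mem_Ico]
        unfold hadj
        omega
      rw [hfe, Finset.card_insert_of_notMem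
          (by simp only [mem_union, mem_range, mem_Ico]; omega),
        Finset.card_union_of_disjoint, Finset.card_range, Nat.card_Ico]
      · omega
      · rw [Finset.disjoint_left]
        intro j hj hj2
        simp only [mem_range] at hj
        simp only [mem_Ico] at hj2
        omega
    · -- x + t ≥ 2k
      have hfe : (Finset.range (2*k)).filter (fun y => ¬ hadj k t x y)
          = insert (x - k) (Finset.Icc (x - t) (2*k - 1) ∪ Finset.range (x + t + 1 - 2*k)) := by
        ext y
        simp only [mem_filter, mem_range, mem_insert, mem_union, mem_Icc]
        unfold hadj
        omega
      rw [hfe, Finset.card_insert_of_notMem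
          (by simp only [mem_union, mem_Icc, mem_range]; omega),
        Finset.card_union_of_disjoint, Finset.card_range, Nat.card_Icc]
      · omega
      · rw [Finset.disjoint_left]
        intro j hj hj2
        simp only [mem_Icc] at hj
        simp only [mem_range] at hj2
        omega
  rw [Finset.card_range] at hco
  omega

end counts

section notwins
variable {k t : ℕ} (hk : 3 ≤ k) (ht1 : 1 ≤ t) (ht2 : t + 1 ≤ k)

include hk ht1 ht2

lemma aux0 (x y : ℕ) (hx : x < 2*k) (hy : y < 2*k) (hxy : x ≠ y)
    (hna : ¬ hadj k t x y)
    (HC : ∀ i, i < 2*k → (xcross k t i x ↔ xcross k t i y))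
    (hx0 : x = 0) : False := by
  subst hx0
  by_cases hy1 : 1 ≤ y ∧ y ≤ t
  · have h := HC 0 (by omega)
    unfold xcross xbase xpert at h; omega
  by_cases hy2 : y = t + 1
  · have h := HC 0 (by omega)
    unfold xcross xbase xpert at h
    unfold hadj at hna
    omega
  by_cases hy3 : y = k
  · have h := HC k (by omega)
    unfold xcross xbase xpert at h; omega
  by_cases hy4 : 2*k - t ≤ y
  · by_cases hy5 : t = k - 1 ∧ y = k + 1
    · have h := HC (2*k - 1) (by omega)
      unfold xcross xbase xpert at h; omega
    · have h := HC (y - t) (by omega)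
      unfold xcross xbase xpert at h; omega
  · unfold hadj at hna; omega

lemma auxT (x y : ℕ) (hx : x < 2*k) (hy : y < 2*k) (hxy : x ≠ y)
    (hna : ¬ hadj k t x y)
    (HC : ∀ i, i < 2*k → (xcross k t i x ↔ xcross k t i y))
    (HH : ∀ z, z < 2*k → (hadj k t x z ↔ hadj k t y z))
    (hxT : x = t + 1) (hy0 : y ≠ 0) : False := by
  subst hxT
  by_cases hy1 : 1 ≤ y ∧ y ≤ t
  · by_cases htt : 2 ≤ t
    · have h := HC (t+1) (by omega)
      unfold xcross xbase xpert at h; omega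
    · -- t = 1, x = 2, y = 1
      have h := HH (k+1) (by omega)
      unfold hadj at h; omega
  by_cases hy2 : t + 2 ≤ y ∧ y ≤ 2*t + 1
  · have h := HC y (by omega)
    unfold xcross xbase xpert at h; omega
  by_cases hy3 : y = k + t + 1
  · have h := HC 0 (by omega)
    unfold xcross xbase xpert at h; omega
  · unfold hadj at hna; omega

lemma auxN (x y : ℕ) (hx : x < 2*k) (hy : y < 2*k) (hxy : x ≠ y)
    (HC : ∀ i, i < 2*k → (xcross k t i x ↔ xcross k t i y))
    (hxs : x ≠ 0 ∧ x ≠ t + 1) (hys : y ≠ 0 ∧ y ≠ t + 1) : False := by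
  have h1 := HC x (by omega)
  have h2 := HC y (by omega)
  unfold xcross xbase xpert at h1 h2
  omega

lemma noOpenTwinsR (x y : ℕ) (hx : x < 2*k) (hy : y < 2*k) (hxy : x ≠ y)
    (hna : ¬ hadj k t x y)
    (HC : ∀ i, i < 2*k → (xcross k t i x ↔ xcross k t i y))
    (HH : ∀ z, z < 2*k → (hadj k t x z ↔ hadj k t y z)) : False := by
  have hna' : ¬ hadj k t y x := fun h => hna (hadj_symm h)
  have HC' : ∀ i, i < 2*k → (xcross k t i y ↔ xcross k t i x) :=
    fun i hi => (HC i hi).symm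
  have HH' : ∀ z, z < 2*k → (hadj k t y z ↔ hadj k t x z) :=
    fun z hz => (HH z hz).symm
  by_cases hx0 : x = 0
  · exact aux0 hk ht1 ht2 x y hx hy hxy hna HC hx0
  by_cases hy0 : y = 0
  · exact aux0 hk ht1 ht2 y x hy hx (Ne.symm hxy) hna' HC' hy0
  by_cases hxT : x = t + 1
  · exact auxT hk ht1 ht2 x y hx hy hxy hna HC HH hxT hy0
  by_cases hyT : y = t + 1
  · exact auxT hk ht1 ht2 y x hy hx (Ne.symm hxy) hna' HC' HH' hyT hx0
  · exact auxN hk ht1 ht2 x y hx hy hxy HC ⟨hx0, hxT⟩ ⟨hy0, hyT⟩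

end notwins

section helpers

lemma card_split (n m : ℕ) (P : ℕ → Prop) [DecidablePred P] :
    ((Finset.range n).filter P).card
      = ((Finset.range n).filter (fun b => b < m ∧ P b)).card
        + ((Finset.range n).filter (fun b => m ≤ b ∧ P b)).card := by
  rw [← Finset.card_union_of_disjoint]
  · congr 1
    ext b
    simp only [mem_union, mem_filter, mem_range]
    constructor
    · rintro ⟨hb, hp⟩
      by_cases h : b < m
      · exact Or.inl ⟨hb, h, hp⟩
      · exact Or.inr ⟨hb, by omega, hp⟩
    · rintro (⟨hb, _, hp⟩ | ⟨hb, _, hp⟩) <;> exact ⟨hb, hp⟩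
  · rw [Finset.disjoint_left]
    intro b hb hb2
    simp only [mem_filter, mem_range] at hb hb2
    omega

lemma card_trim (n m : ℕ) (hm : m ≤ n) (Q : ℕ → Prop) [DecidablePred Q] :
    ((Finset.range n).filter (fun b => b < m ∧ Q b)).card
      = ((Finset.range m).filter Q).card := by
  congr 1
  ext b
  simp only [mem_filter, mem_range]
  constructor
  · rintro ⟨_, h1, h2⟩; exact ⟨h1, h2⟩
  · rintro ⟨h1, h2⟩; exact ⟨by omega, h1, h2⟩

lemma card_shift (m : ℕ) (Q : ℕ → Prop) [DecidablePred Q] :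
    ((Finset.range (2*m)).filter (fun b => m ≤ b ∧ Q (b - m))).card
      = ((Finset.range m).filter Q).card := by
  apply Finset.card_nbij' (fun b => b - m) (fun j => j + m)
  · intro b hb; simp only [Finset.mem_coe, mem_filter, mem_range] at hb ⊢
    exact ⟨by omega, hb.2.2⟩
  · intro j hj; simp only [Finset.mem_coe, mem_filter, mem_range] at hj ⊢
    refine ⟨by omega, by omega, ?_⟩
    have : j + m - m = j := by omega
    rw [this]; exact hj.2
  · intro b hb; simp only [Finset.mem_coe, mem_filter, mem_range] at hb; dsimp only; omega
  · intro j hj; dsimp only; omega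

end helpers

section degG1
variable {k t : ℕ} (hk : 3 ≤ k) (ht1 : 1 ≤ t) (ht2 : t + 1 ≤ k)

lemma deg_filter {n : ℕ} (G : SimpleGraph (Fin n)) [DecidableRel G.Adj] (v : Fin n) :
    deg G v = (Finset.univ.filter (fun w => G.Adj v w)).card := by
  unfold deg
  rw [Set.ncard_eq_toFinset_card']
  congr 1
  convert Set.toFinset_setOf (fun w => G.Adj v w)
  rfl

include hk ht1 ht2

lemma deg_G1 (v : Fin (4*k)) :
    deg (G1 k t) v = if v.val < 2*k then 2*k + t else 2*k - 1 - t := by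
  rw [deg_filter]
  have hG : ∀ w : Fin (4*k), (G1 k t).Adj v w ↔ valAdj k t v.val w.val := fun w => Iff.rfl
  have h0 : (Finset.univ.filter (fun w => (G1 k t).Adj v w)).card
      = ((Finset.range (4*k)).filter (fun b => valAdj k t v.val b)).card := by
    rw [← card_fin_filter]
    congr 1
  rw [h0, card_split (4*k) (2*k)]
  set a := v.val with hav
  have hva : a < 4*k := v.isLt
  by_cases hL : a < 2*k
  · rw [if_pos hL]
    have hp1 : ((Finset.range (4*k)).filter (fun b => b < 2*k ∧ valAdj k t a b))
        = (Finset.range (2*k)).erase a := by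
      ext b
      simp only [mem_filter, mem_range, mem_erase]
      constructor
      · rintro ⟨_, h1, h2⟩
        rw [valAdj_LL hL h1] at h2
        exact ⟨fun hh => h2 hh.symm, h1⟩
      · rintro ⟨h1, h2⟩
        exact ⟨by omega, h2, (valAdj_LL hL h2).mpr (fun hh => h1 hh.symm)⟩
    have hp2 : ((Finset.range (4*k)).filter (fun b => 2*k ≤ b ∧ valAdj k t a b)).card
        = ((Finset.range (2*k)).filter (fun j => xcross k t a j)).card := by
      have he : ((Finset.range (4*k)).filter (fun b => 2*k ≤ b ∧ valAdj k t a b))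
          = ((Finset.range (2*(2*k))).filter (fun b => 2*k ≤ b ∧ xcross k t a (b - 2*k))) := by
        ext b
        simp only [mem_filter, mem_range]
        constructor
        · rintro ⟨h1, h2, h3⟩
          rw [valAdj_LR hL h2] at h3
          exact ⟨by omega, h2, h3⟩
        · rintro ⟨h1, h2, h3⟩
          exact ⟨by omega, h2, (valAdj_LR hL h2).mpr h3⟩
      rw [he, card_shift (2*k) (fun j => xcross k t a j)]
    rw [hp1, hp2, Finset.card_erase_of_mem (by simp only [mem_range]; omega),
      Finset.card_range, rowcount hk ht1 ht2 a hL]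
    omega
  · rw [if_neg hL]
    have hR : 2*k ≤ a := by omega
    set x := a - 2*k with hxd
    have hx : x < 2*k := by omega
    have hp1 : ((Finset.range (4*k)).filter (fun b => b < 2*k ∧ valAdj k t a b))
        = (Finset.range (2*k)).filter (fun i => xcross k t i x) := by
      ext b
      simp only [mem_filter, mem_range]
      constructor
      · rintro ⟨_, h1, h2⟩
        rw [valAdj_RL hR h1] at h2
        exact ⟨h1, h2⟩
      · rintro ⟨h1, h2⟩
        exact ⟨by omega, h1, (valAdj_RL hR h1).mpr h2⟩
    have hp2 : ((Finset.range (4*k)).filter (fun b => 2*k ≤ b ∧ valAdj k t a b)).card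
        = ((Finset.range (2*k)).filter (fun y => hadj k t x y)).card := by
      have he : ((Finset.range (4*k)).filter (fun b => 2*k ≤ b ∧ valAdj k t a b))
          = ((Finset.range (2*(2*k))).filter (fun b => 2*k ≤ b ∧ hadj k t x (b - 2*k))) := by
        ext b
        simp only [mem_filter, mem_range]
        constructor
        · rintro ⟨h1, h2, h3⟩
          rw [valAdj_RR hR h2] at h3
          exact ⟨by omega, h2, h3⟩
        · rintro ⟨h1, h2, h3⟩
          exact ⟨by omega, h2, (valAdj_RR hR h2).mpr h3⟩
      rw [he, card_shift (2*k) (fun y => hadj k t x y)]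
    rw [hp1, hp2, colcount hk ht1 ht2 x hx, hcount hk ht1 ht2 x hx]
    omega

end degG1

section G1main
variable {k t : ℕ} (hk : 3 ≤ k) (ht1 : 1 ≤ t) (ht2 : t + 1 ≤ k)

include hk ht1 ht2

lemma G1_closed_twins :
    ∃ u v : Fin (4*k), (G1 k t).Adj u v ∧
      ∀ w, w ≠ u → w ≠ v → ((G1 k t).Adj u w ↔ (G1 k t).Adj v w) := by
  refine ⟨⟨0, by omega⟩, ⟨1, by omega⟩, ?_, ?_⟩
  · show valAdj k t 0 1
    exact (valAdj_LL (by omega) (by omega)).mpr (by omega)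
  · intro w hw0 hw1
    show valAdj k t 0 w.val ↔ valAdj k t 1 w.val
    have hwv0 : w.val ≠ 0 := fun h => hw0 (Fin.ext h)
    have hwv1 : w.val ≠ 1 := fun h => hw1 (Fin.ext h)
    by_cases hL : w.val < 2*k
    · rw [valAdj_LL (by omega) hL, valAdj_LL (by omega) hL]
      omega
    · have hR : 2*k ≤ w.val := by omega
      rw [valAdj_LR (by omega) hR, valAdj_LR (by omega) hR]
      unfold xcross xbase xpert
      omega

lemma G1_no_open_twins :
    ∀ a b : Fin (4*k), a ≠ b → ¬ (G1 k t).Adj a b →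
      ∃ w, ¬ ((G1 k t).Adj a w ↔ (G1 k t).Adj b w) := by
  intro a b hne hnadj
  by_contra hc
  push_neg at hc
  have h : ∀ w, (G1 k t).Adj a w ↔ (G1 k t).Adj b w := by
    intro w
    have := hc w
    tauto
  have hvne : a.val ≠ b.val := fun hh => hne (Fin.ext hh)
  -- helper for the mixed case
  have mixed : ∀ (p q : Fin (4*k)), p.val < 2*k → 2*k ≤ q.val →
      (∀ w, (G1 k t).Adj p w ↔ (G1 k t).Adj q w) → False := by
    intro p q hp hq hpq
    have key : ∀ i, i < 2*k → i ≠ p.val → xcross k t i (q.val - 2*k) := by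
      intro i hi hip
      have hw : (G1 k t).Adj p ⟨i, by omega⟩ := by
        show valAdj k t p.val i
        exact (valAdj_LL hp hi).mpr (fun hh => hip hh.symm)
      have := (hpq ⟨i, by omega⟩).mp hw
      have h2 : valAdj k t q.val i := this
      exact (valAdj_RL hq hi).mp h2
    have hsub : (Finset.range (2*k)).erase p.val
        ⊆ (Finset.range (2*k)).filter (fun i => xcross k t i (q.val - 2*k)) := by
      intro i hi
      simp only [mem_erase, mem_range] at hi
      simp only [mem_filter, mem_range]
      exact ⟨hi.2, key i hi.2 hi.1⟩
    have hcard := Finset.card_le_card hsub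
    rw [Finset.card_erase_of_mem (by simp only [mem_range]; omega), Finset.card_range,
      colcount hk ht1 ht2 (q.val - 2*k) (by omega)] at hcard
    omega
  by_cases haL : a.val < 2*k
  · by_cases hbL : b.val < 2*k
    · exact hnadj ((valAdj_LL haL hbL).mpr hvne)
    · exact mixed a b haL (by omega) h
  · by_cases hbL : b.val < 2*k
    · exact mixed b a hbL (by omega) (fun w => (h w).symm)
    · -- both right
      have haR : 2*k ≤ a.val := by omega
      have hbR : 2*k ≤ b.val := by omega
      set x := a.val - 2*k with hxd
      set y := b.val - 2*k with hyd
      apply noOpenTwinsR hk ht1 ht2 x y (by omega) (by omega) (by omega)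
      · intro hh
        exact hnadj ((valAdj_RR haR hbR).mpr hh)
      · intro i hi
        have := h ⟨i, by omega⟩
        rw [show (G1 k t).Adj a ⟨i, by omega⟩ ↔ valAdj k t a.val i from Iff.rfl,
          show (G1 k t).Adj b ⟨i, by omega⟩ ↔ valAdj k t b.val i from Iff.rfl,
          valAdj_RL haR hi, valAdj_RL hbR hi] at this
        exact this
      · intro z hz
        have := h ⟨2*k + z, by omega⟩
        rw [show (G1 k t).Adj a ⟨2*k + z, by omega⟩ ↔ valAdj k t a.val (2*k+z) from Iff.rfl,
          show (G1 k t).Adj b ⟨2*k + z, by omega⟩ ↔ valAdj k t b.val (2*k+z) from Iff.rfl,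
          valAdj_RR haR (by omega), valAdj_RR hbR (by omega)] at this
        rw [show 2*k + z - 2*k = z by omega] at this
        exact this

lemma construction1 :
    degMultiset (G1 k t)
        = Multiset.replicate (2*k) (2*k + t) + Multiset.replicate (2*k) (2*k - 1 - t) ∧
      ¬ IsSelfCompl (G1 k t) := by
  constructor
  · exact degMultiset_eq k (2*k+t) (2*k-1-t) (by omega) _ (deg_G1 hk ht1 ht2)
  · obtain ⟨u, v, huv, hct⟩ := G1_closed_twins hk ht1 ht2
    exact not_isSelfCompl_of_twins _ u v huv hct (G1_no_open_twins hk ht1 ht2)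

end G1main

-- Construction 2 : t = 0, k ≥ 2. d = 2k, d' = 2k-1.
def cross2 (k a j : ℕ) : Prop := (a ≤ 1 ∧ j = 0) ∨ (2 ≤ a ∧ a < 2*k ∧ j + 1 = a)
def H0 (k x y : ℕ) : Prop :=
  (x = 0 ∧ y = 1) ∨ (x = 1 ∧ y = 0) ∨ (x = 0 ∧ y = 2) ∨ (x = 2 ∧ y = 0) ∨
  (3 ≤ x ∧ y = x + 1 ∧ y ≤ 2*k - 2 ∧ x % 2 = 1) ∨
  (3 ≤ y ∧ x = y + 1 ∧ x ≤ 2*k - 2 ∧ y % 2 = 1)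
def hadj2 (k x y : ℕ) : Prop := x ≠ y ∧ ¬ H0 k x y

instance (k a j : ℕ) : Decidable (cross2 k a j) := by unfold cross2; infer_instance
instance (k x y : ℕ) : Decidable (H0 k x y) := by unfold H0; infer_instance
instance (k x y : ℕ) : Decidable (hadj2 k x y) := by unfold hadj2; infer_instance

def valAdj2 (k a b : ℕ) : Prop :=
  (a < 2*k ∧ b < 2*k ∧ a ≠ b) ∨
  (a < 2*k ∧ 2*k ≤ b ∧ cross2 k a (b - 2*k)) ∨
  (b < 2*k ∧ 2*k ≤ a ∧ cross2 k b (a - 2*k)) ∨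
  (2*k ≤ a ∧ 2*k ≤ b ∧ hadj2 k (a - 2*k) (b - 2*k))

instance (k a b : ℕ) : Decidable (valAdj2 k a b) := by unfold valAdj2; infer_instance

lemma valAdj2_LL {k a b : ℕ} (ha : a < 2*k) (hb : b < 2*k) :
    valAdj2 k a b ↔ a ≠ b := by
  unfold valAdj2
  constructor
  · rintro (⟨_,_,h⟩|⟨_,h,_⟩|⟨_,h,_⟩|⟨h,_,_⟩) <;> omega
  · intro h; exact Or.inl ⟨ha, hb, h⟩

lemma valAdj2_LR {k a b : ℕ} (ha : a < 2*k) (hb : 2*k ≤ b) :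
    valAdj2 k a b ↔ cross2 k a (b - 2*k) := by
  unfold valAdj2
  constructor
  · rintro (⟨_,h,_⟩|⟨_,_,h⟩|⟨h,_,_⟩|⟨h,_,_⟩) <;> first | exact h | omega
  · intro h; exact Or.inr (Or.inl ⟨ha, hb, h⟩)

lemma valAdj2_RL {k a b : ℕ} (ha : 2*k ≤ a) (hb : b < 2*k) :
    valAdj2 k a b ↔ cross2 k b (a - 2*k) := by
  unfold valAdj2
  constructor
  · rintro (⟨h,_,_⟩|⟨h,_,_⟩|⟨_,_,h⟩|⟨_,h,_⟩) <;> first | exact h | omega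
  · intro h; exact Or.inr (Or.inr (Or.inl ⟨hb, ha, h⟩))

lemma valAdj2_RR {k a b : ℕ} (ha : 2*k ≤ a) (hb : 2*k ≤ b) :
    valAdj2 k a b ↔ hadj2 k (a - 2*k) (b - 2*k) := by
  unfold valAdj2
  constructor
  · rintro (⟨h,_,_⟩|⟨h,_,_⟩|⟨_,h,_⟩|⟨_,_,h⟩) <;> first | exact h | omega
  · intro h; exact Or.inr (Or.inr (Or.inr ⟨ha, hb, h⟩))

lemma hadj2_symm {k x y : ℕ} (h : hadj2 k x y) : hadj2 k y x := by
  unfold hadj2 H0 at *; omega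

lemma valAdj2_symm {k a b : ℕ} (h : valAdj2 k a b) : valAdj2 k b a := by
  unfold valAdj2 at *
  rcases h with ⟨h1,h2,h3⟩|⟨h1,h2,h3⟩|⟨h1,h2,h3⟩|⟨h1,h2,h3⟩
  · exact Or.inl ⟨h2, h1, fun hh => h3 hh.symm⟩
  · exact Or.inr (Or.inr (Or.inl ⟨h1, h2, h3⟩))
  · exact Or.inr (Or.inl ⟨h1, h2, h3⟩)
  · exact Or.inr (Or.inr (Or.inr ⟨h2, h1, hadj2_symm h3⟩))

lemma valAdj2_irrefl {k a : ℕ} : ¬ valAdj2 k a a := by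
  unfold valAdj2 hadj2
  rintro (⟨_,_,h⟩|⟨h1,h2,_⟩|⟨h1,h2,_⟩|⟨_,_,h,_⟩) <;> omega

def G2 (k : ℕ) : SimpleGraph (Fin (4*k)) where
  Adj v w := valAdj2 k v.val w.val
  symm := ⟨fun v w h => valAdj2_symm h⟩
  loopless := ⟨fun v h => valAdj2_irrefl h⟩

instance (k : ℕ) : DecidableRel (G2 k).Adj := fun v w => by
  unfold G2; infer_instance

section counts2
variable {k : ℕ} (hk : 2 ≤ k)

include hk

lemma rowcount2 (a : ℕ) (ha : a < 2*k) :
    (((Finset.range (2*k)).filter (fun j => cross2 k a j)).card) = 1 := by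
  by_cases ha1 : a ≤ 1
  · have hfe : (Finset.range (2*k)).filter (fun j => cross2 k a j) = {0} := by
      ext j
      simp only [mem_filter, mem_range, mem_singleton]
      unfold cross2
      omega
    rw [hfe, Finset.card_singleton]
  · have hfe : (Finset.range (2*k)).filter (fun j => cross2 k a j) = {a - 1} := by
      ext j
      simp only [mem_filter, mem_range, mem_singleton]
      unfold cross2
      omega
    rw [hfe, Finset.card_singleton]

lemma Rcount2 (x : ℕ) (hx : x < 2*k) :
    (((Finset.range (2*k)).filter (fun i => cross2 k i x)).card)
      + (((Finset.range (2*k)).filter (fun y => hadj2 k x y)).card) = 2*k - 1 := by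
  have hsum := Finset.card_filter_add_card_filter_not
    (s := Finset.range (2*k)) (p := fun y => hadj2 k x y)
  rw [Finset.card_range] at hsum
  -- compute the column count and the negated H-count per case
  by_cases hx0 : x = 0
  · subst hx0
    have hc : (Finset.range (2*k)).filter (fun i => cross2 k i 0) = {0, 1} := by
      ext i
      simp only [mem_filter, mem_range, mem_insert, mem_singleton]
      unfold cross2
      omega
    have hn : (Finset.range (2*k)).filter (fun y => ¬ hadj2 k 0 y) = {0, 1, 2} := by
      ext y
      simp only [mem_filter, mem_range, mem_insert, mem_singleton]
      unfold hadj2 H0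
      omega
    rw [hc] at *
    rw [hn] at hsum
    have h1 : ({0, 1} : Finset ℕ).card = 2 := by decide
    have h2 : ({0, 1, 2} : Finset ℕ).card = 3 := by decide
    omega
  by_cases hx12 : x = 1 ∨ x = 2
  · have hc : (Finset.range (2*k)).filter (fun i => cross2 k i x) = {x + 1} := by
      ext i
      simp only [mem_filter, mem_range, mem_singleton]
      unfold cross2
      omega
    have hn : (Finset.range (2*k)).filter (fun y => ¬ hadj2 k x y) = {x, 0} := by
      ext y
      simp only [mem_filter, mem_range, mem_insert, mem_singleton]
      unfold hadj2 H0
      omega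
    rw [hn] at hsum
    rw [hc, Finset.card_singleton]
    rw [Finset.card_insert_of_notMem (by simp only [mem_singleton]; omega),
      Finset.card_singleton] at hsum
    omega
  by_cases hxl : x = 2*k - 1
  · have hc : (Finset.range (2*k)).filter (fun i => cross2 k i x) = ∅ := by
      ext i
      simp only [mem_filter, mem_range, Finset.notMem_empty, iff_false]
      unfold cross2
      omega
    have hn : (Finset.range (2*k)).filter (fun y => ¬ hadj2 k x y) = {x} := by
      ext y
      simp only [mem_filter, mem_range, mem_singleton]
      unfold hadj2 H0
      omega
    rw [hn, Finset.card_singleton] at hsum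
    rw [hc, Finset.card_empty]
    omega
  · -- 3 ≤ x ≤ 2k-2
    have hx3 : 3 ≤ x ∧ x ≤ 2*k - 2 := by omega
    have hc : (Finset.range (2*k)).filter (fun i => cross2 k i x) = {x + 1} := by
      ext i
      simp only [mem_filter, mem_range, mem_singleton]
      unfold cross2
      omega
    by_cases hpar : x % 2 = 1
    · have hn : (Finset.range (2*k)).filter (fun y => ¬ hadj2 k x y) = {x, x + 1} := by
        ext y
        simp only [mem_filter, mem_range, mem_insert, mem_singleton]
        unfold hadj2 H0
        omega
      rw [hn, Finset.card_insert_of_notMem (by simp only [mem_singleton]; omega),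
        Finset.card_singleton] at hsum
      rw [hc, Finset.card_singleton]
      omega
    · have hn : (Finset.range (2*k)).filter (fun y => ¬ hadj2 k x y) = {x, x - 1} := by
        ext y
        simp only [mem_filter, mem_range, mem_insert, mem_singleton]
        unfold hadj2 H0
        omega
      rw [hn, Finset.card_insert_of_notMem (by simp only [mem_singleton]; omega),
        Finset.card_singleton] at hsum
      rw [hc, Finset.card_singleton]
      omega

omit hk in
lemma colcount2_le (x : ℕ) :
    (((Finset.range (2*k)).filter (fun i => cross2 k i x)).card) ≤ 2 := by
  by_cases hx0 : x = 0
  · subst hx0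
    have hsub : (Finset.range (2*k)).filter (fun i => cross2 k i 0) ⊆ {0, 1} := by
      intro i hi
      simp only [mem_filter, mem_range] at hi
      simp only [mem_insert, mem_singleton]
      rcases hi.2 with ⟨h1, _⟩ | ⟨h1, h2, h3⟩ <;> omega
    calc _ ≤ ({0,1} : Finset ℕ).card := Finset.card_le_card hsub
    _ = 2 := by decide
  · have hsub : (Finset.range (2*k)).filter (fun i => cross2 k i x) ⊆ {x + 1} := by
      intro i hi
      simp only [mem_filter, mem_range] at hi
      simp only [mem_singleton]
      rcases hi.2 with ⟨h1, h2⟩ | ⟨h1, h2, h3⟩ <;> omega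
    calc _ ≤ ({x+1} : Finset ℕ).card := Finset.card_le_card hsub
    _ = 1 := Finset.card_singleton _
    _ ≤ 2 := by omega

end counts2

section degG2
variable {k : ℕ} (hk : 2 ≤ k)

include hk

lemma deg_G2 (v : Fin (4*k)) :
    deg (G2 k) v = if v.val < 2*k then 2*k else 2*k - 1 := by
  rw [deg_filter]
  have h0 : (Finset.univ.filter (fun w => (G2 k).Adj v w)).card
      = ((Finset.range (4*k)).filter (fun b => valAdj2 k v.val b)).card := by
    rw [← card_fin_filter]
    congr 1
  rw [h0, card_split (4*k) (2*k)]
  set a := v.val with hav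
  have hva : a < 4*k := v.isLt
  by_cases hL : a < 2*k
  · rw [if_pos hL]
    have hp1 : ((Finset.range (4*k)).filter (fun b => b < 2*k ∧ valAdj2 k a b))
        = (Finset.range (2*k)).erase a := by
      ext b
      simp only [mem_filter, mem_range, mem_erase]
      constructor
      · rintro ⟨_, h1, h2⟩
        rw [valAdj2_LL hL h1] at h2
        exact ⟨fun hh => h2 hh.symm, h1⟩
      · rintro ⟨h1, h2⟩
        exact ⟨by omega, h2, (valAdj2_LL hL h2).mpr (fun hh => h1 hh.symm)⟩
    have hp2 : ((Finset.range (4*k)).filter (fun b => 2*k ≤ b ∧ valAdj2 k a b)).card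
        = ((Finset.range (2*k)).filter (fun j => cross2 k a j)).card := by
      have he : ((Finset.range (4*k)).filter (fun b => 2*k ≤ b ∧ valAdj2 k a b))
          = ((Finset.range (2*(2*k))).filter (fun b => 2*k ≤ b ∧ cross2 k a (b - 2*k))) := by
        ext b
        simp only [mem_filter, mem_range]
        constructor
        · rintro ⟨h1, h2, h3⟩
          rw [valAdj2_LR hL h2] at h3
          exact ⟨by omega, h2, h3⟩
        · rintro ⟨h1, h2, h3⟩
          exact ⟨by omega, h2, (valAdj2_LR hL h2).mpr h3⟩
      rw [he, card_shift (2*k) (fun j => cross2 k a j)]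
    rw [hp1, hp2, Finset.card_erase_of_mem (by simp only [mem_range]; omega),
      Finset.card_range, rowcount2 hk a hL]
    omega
  · rw [if_neg hL]
    have hR : 2*k ≤ a := by omega
    set x := a - 2*k with hxd
    have hx : x < 2*k := by omega
    have hp1 : ((Finset.range (4*k)).filter (fun b => b < 2*k ∧ valAdj2 k a b))
        = (Finset.range (2*k)).filter (fun i => cross2 k i x) := by
      ext b
      simp only [mem_filter, mem_range]
      constructor
      · rintro ⟨_, h1, h2⟩
        rw [valAdj2_RL hR h1] at h2
        exact ⟨h1, h2⟩
      · rintro ⟨h1, h2⟩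
        exact ⟨by omega, h1, (valAdj2_RL hR h1).mpr h2⟩
    have hp2 : ((Finset.range (4*k)).filter (fun b => 2*k ≤ b ∧ valAdj2 k a b)).card
        = ((Finset.range (2*k)).filter (fun y => hadj2 k x y)).card := by
      have he : ((Finset.range (4*k)).filter (fun b => 2*k ≤ b ∧ valAdj2 k a b))
          = ((Finset.range (2*(2*k))).filter (fun b => 2*k ≤ b ∧ hadj2 k x (b - 2*k))) := by
        ext b
        simp only [mem_filter, mem_range]
        constructor
        · rintro ⟨h1, h2, h3⟩
          rw [valAdj2_RR hR h2] at h3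
          exact ⟨by omega, h2, h3⟩
        · rintro ⟨h1, h2, h3⟩
          exact ⟨by omega, h2, (valAdj2_RR hR h2).mpr h3⟩
      rw [he, card_shift (2*k) (fun y => hadj2 k x y)]
    rw [hp1, hp2, Rcount2 hk x hx]

lemma noOpenTwinsR2 (x y : ℕ) (hx : x < 2*k) (hy : y < 2*k) (hxy : x ≠ y)
    (HC : ∀ i, i < 2*k → (cross2 k i x ↔ cross2 k i y)) : False := by
  by_cases h0 : x = 0 ∨ y = 0
  · have h := HC 0 (by omega)
    unfold cross2 at h; omega
  by_cases hxl : x ≤ 2*k - 2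
  · have h := HC (x+1) (by omega)
    unfold cross2 at h; omega
  · have h := HC (y+1) (by omega)
    unfold cross2 at h; omega

lemma G2_closed_twins :
    ∃ u v : Fin (4*k), (G2 k).Adj u v ∧
      ∀ w, w ≠ u → w ≠ v → ((G2 k).Adj u w ↔ (G2 k).Adj v w) := by
  refine ⟨⟨0, by omega⟩, ⟨1, by omega⟩, ?_, ?_⟩
  · show valAdj2 k 0 1
    exact (valAdj2_LL (by omega) (by omega)).mpr (by omega)
  · intro w hw0 hw1
    show valAdj2 k 0 w.val ↔ valAdj2 k 1 w.val
    have hwv0 : w.val ≠ 0 := fun h => hw0 (Fin.ext h)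
    have hwv1 : w.val ≠ 1 := fun h => hw1 (Fin.ext h)
    by_cases hL : w.val < 2*k
    · rw [valAdj2_LL (by omega) hL, valAdj2_LL (by omega) hL]
      omega
    · have hR : 2*k ≤ w.val := by omega
      rw [valAdj2_LR (by omega) hR, valAdj2_LR (by omega) hR]
      unfold cross2
      omega

lemma G2_no_open_twins :
    ∀ a b : Fin (4*k), a ≠ b → ¬ (G2 k).Adj a b →
      ∃ w, ¬ ((G2 k).Adj a w ↔ (G2 k).Adj b w) := by
  intro a b hne hnadj
  by_contra hc
  push_neg at hc
  have h : ∀ w, (G2 k).Adj a w ↔ (G2 k).Adj b w := by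
    intro w
    have := hc w
    tauto
  have hvne : a.val ≠ b.val := fun hh => hne (Fin.ext hh)
  have mixed : ∀ (p q : Fin (4*k)), p.val < 2*k → 2*k ≤ q.val →
      (∀ w, (G2 k).Adj p w ↔ (G2 k).Adj q w) → False := by
    intro p q hp hq hpq
    have key : ∀ i, i < 2*k → i ≠ p.val → cross2 k i (q.val - 2*k) := by
      intro i hi hip
      have hw : (G2 k).Adj p ⟨i, by omega⟩ := by
        show valAdj2 k p.val i
        exact (valAdj2_LL hp hi).mpr (fun hh => hip hh.symm)
      have h2 : valAdj2 k q.val i := (hpq ⟨i, by omega⟩).mp hw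
      exact (valAdj2_RL hq hi).mp h2
    have hsub : (Finset.range (2*k)).erase p.val
        ⊆ (Finset.range (2*k)).filter (fun i => cross2 k i (q.val - 2*k)) := by
      intro i hi
      simp only [mem_erase, mem_range] at hi
      simp only [mem_filter, mem_range]
      exact ⟨hi.2, key i hi.2 hi.1⟩
    have hcard := Finset.card_le_card hsub
    rw [Finset.card_erase_of_mem (by simp only [mem_range]; omega), Finset.card_range] at hcard
    have := colcount2_le (k := k) (q.val - 2*k)
    omega
  by_cases haL : a.val < 2*k
  · by_cases hbL : b.val < 2*k
    · exact hnadj ((valAdj2_LL haL hbL).mpr hvne)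
    · exact mixed a b haL (by omega) h
  · by_cases hbL : b.val < 2*k
    · exact mixed b a hbL (by omega) (fun w => (h w).symm)
    · have haR : 2*k ≤ a.val := by omega
      have hbR : 2*k ≤ b.val := by omega
      apply noOpenTwinsR2 hk (a.val - 2*k) (b.val - 2*k) (by omega) (by omega) (by omega)
      intro i hi
      have := h ⟨i, by omega⟩
      rw [show (G2 k).Adj a ⟨i, by omega⟩ ↔ valAdj2 k a.val i from Iff.rfl,
        show (G2 k).Adj b ⟨i, by omega⟩ ↔ valAdj2 k b.val i from Iff.rfl,
        valAdj2_RL haR hi, valAdj2_RL hbR hi] at this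
      exact this

lemma construction2 :
    degMultiset (G2 k)
        = Multiset.replicate (2*k) (2*k) + Multiset.replicate (2*k) (2*k - 1) ∧
      ¬ IsSelfCompl (G2 k) := by
  constructor
  · exact degMultiset_eq k (2*k) (2*k-1) (by omega) _ (deg_G2 hk)
  · obtain ⟨u, v, huv, hct⟩ := G2_closed_twins hk
    exact not_isSelfCompl_of_twins _ u v huv hct (G2_no_open_twins hk)

end degG2


/-- Let `k ≥ 2` and let `d` satisfy `2k ≤ d ≤ 3k - 1` and `d ≠ 5`.
Then the degree sequence `(d^{2k}, (4k-1-d)^{2k})` is not forcibly self-complementary: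
there exists a graph on `4k` vertices with `2k` vertices of degree `d` and `2k`
vertices of degree `4k - 1 - d` that is not self-complementary. -/
theorem two_degrees_not_forcibly (k d : ℕ) (hk : 2 ≤ k)
    (h1 : 2 * k ≤ d) (h2 : d + 1 ≤ 3 * k) (h5 : d ≠ 5) :
    ∃ G : SimpleGraph (Fin (4 * k)),
      degMultiset G =
        Multiset.replicate (2 * k) d + Multiset.replicate (2 * k) (4 * k - 1 - d) ∧
      ¬ IsSelfCompl G := by
  by_cases hd : d = 2 * k
  · refine ⟨G2 k, ?_, (construction2 hk).2⟩
    have := (construction2 hk).1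
    rw [show d = 2*k from hd, show 4*k - 1 - (2*k) = 2*k - 1 by omega]
    exact this
  · set t := d - 2*k with htd
    have hk3 : 3 ≤ k := by omega
    have ht1 : 1 ≤ t := by omega
    have ht2 : t + 1 ≤ k := by omega
    refine ⟨G1 k t, ?_, (construction1 hk3 ht1 ht2).2⟩
    have := (construction1 hk3 ht1 ht2).1
    rw [show d = 2*k + t by omega, show 4*k - 1 - (2*k + t) = 2*k - 1 - t by omega]
    exact this
end

section
/- Let k1, k2 > 0, let n = 4(k1 + k2), and let d be an integer with d - 1 > n - d. If the degree sequence (d^{2k1}, (d-1)^{2k2}, (n-d)^{2k2}, (n-1-d)^{2k1}) has at least one realization, then it is not forcibly self-complementary; that is, it has a realization that is not self-complementary. -/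
open SimpleGraph

section Infra

open Finset

variable {V : Type*} [Fintype V] [DecidableEq V]

lemma deg_eq_degree (G : SimpleGraph V) [DecidableRel G.Adj] (v : V) :
    deg G v = G.degree v := by
  rw [deg, Set.ncard_eq_toFinset_card', ← neighborFinset_def,
    card_neighborFinset_eq_degree]

lemma degMultiset_eq_s12 (G : SimpleGraph V) [DecidableRel G.Adj] :
    degMultiset G = Finset.univ.val.map fun v => G.degree v := by
  have hinst : Fintype.ofFinite V = ‹Fintype V› := Subsingleton.elim _ _
  unfold degMultiset
  rw [hinst]
  congr 1
  funext v
  exact deg_eq_degree G v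

/-- number of edges between `A` and its complement -/
def crossCount (G : SimpleGraph V) [DecidableRel G.Adj] (A : Finset V) : ℕ :=
  ((A ×ˢ Aᶜ).filter fun p => G.Adj p.1 p.2).card

lemma crossCount_eq_sum (G : SimpleGraph V) [DecidableRel G.Adj] (A : Finset V) :
    crossCount G A = ∑ a ∈ A, (Aᶜ.filter fun b => G.Adj a b).card := by
  rw [crossCount]
  rw [Finset.card_eq_sum_card_fiberwise (f := Prod.fst) (t := A)
    (fun p hp => (Finset.mem_product.1 (Finset.mem_filter.1 hp).1).1)]
  refine Finset.sum_congr rfl fun a ha => ?_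
  refine Finset.card_bij (fun p _ => p.2) ?_ ?_ ?_
  · rintro ⟨x, y⟩ hp
    simp only [Finset.mem_filter, Finset.mem_product] at hp
    rcases hp with ⟨⟨⟨hx, hy⟩, hadj⟩, rfl⟩
    simpa [hy] using hadj
  · rintro ⟨x, y⟩ hp ⟨x', y'⟩ hp' h
    simp only [Finset.mem_filter] at hp hp'
    simp_all [Prod.ext_iff]
  · intro b hb
    simp only [Finset.mem_filter] at hb
    exact ⟨(a, b), by simp [ha, hb.1, hb.2], rfl⟩

end Infra
section SC
open Finset
set_option linter.unusedSectionVars false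

variable {V : Type*} [Fintype V] [DecidableEq V]

lemma iso_degree {G G' : SimpleGraph V} [DecidableRel G.Adj] [DecidableRel G'.Adj]
    (f : G ≃g G') (v : V) : G'.degree (f v) = G.degree v := by
  rw [← card_neighborSet_eq_degree, ← card_neighborSet_eq_degree]
  exact (Fintype.card_congr (f.mapNeighborSet v)).symm

lemma crossCount_of_selfCompl (G : SimpleGraph V) [DecidableRel G.Adj] (s : ℕ)
    (hV : Fintype.card V = 4*s)
    (hcA : (Finset.univ.filter fun v => 2*s ≤ G.degree v).card = 2*s)
    (hsc : IsSelfCompl G) :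
    crossCount G (Finset.univ.filter fun v => 2*s ≤ G.degree v) = 2*s*s := by
  classical
  obtain ⟨f⟩ := hsc
  set A : Finset V := Finset.univ.filter fun v => 2*s ≤ G.degree v with hA
  have hdegf : ∀ v, G.degree (f v) + 1 + G.degree v = 4*s := by
    intro v
    have h1 : Gᶜ.degree (f v) = G.degree v := iso_degree f v
    have h2 : Gᶜ.degree (f v) = Fintype.card V - 1 - G.degree (f v) := degree_compl _ _
    have h3 : G.degree (f v) < Fintype.card V := G.degree_lt_card_verts (f v)
    have h4 : G.degree v < Fintype.card V := G.degree_lt_card_verts v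
    omega
  have hmemA : ∀ v, v ∈ A ↔ 2*s ≤ G.degree v := by
    intro v; simp [hA]
  have hcross : ∀ v, v ∈ A ↔ f v ∉ A := by
    intro v
    rw [hmemA, hmemA]
    have h5 := hdegf v
    have h4 : G.degree v < Fintype.card V := G.degree_lt_card_verts v
    rw [hV] at h4
    omega
  have hcross' : ∀ v, v ∉ A ↔ f v ∈ A := by
    intro v
    rw [iff_comm, ← not_iff_not, not_not, ← hcross]
  have hadjf : ∀ u v, G.Adj u v → ¬ G.Adj (f u) (f v) := by
    intro u v huv
    have : Gᶜ.Adj (f u) (f v) := f.map_adj_iff.2 huv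
    exact this.2
  have hadjf' : ∀ u v : V, u ≠ v → ¬ G.Adj u v → G.Adj (f.symm u) (f.symm v) := by
    intro u v hne hnadj
    exact f.symm.map_adj_iff.2 ⟨hne, hnadj⟩
  have hcardB : (Aᶜ : Finset V).card = 2*s := by
    rw [Finset.card_compl, hV, hcA]; omega
  have hsplit := Finset.card_filter_add_card_filter_not
    (s := A ×ˢ Aᶜ) (p := fun p => G.Adj p.1 p.2)
  have hprod : (A ×ˢ (Aᶜ : Finset V)).card = 2*s*(2*s) := by
    rw [Finset.card_product, hcA, hcardB]
  have hbij : ((A ×ˢ (Aᶜ : Finset V)).filter fun p => G.Adj p.1 p.2).card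
      = ((A ×ˢ (Aᶜ : Finset V)).filter fun p => ¬ G.Adj p.1 p.2).card := by
    refine Finset.card_bij' (fun p _ => (f p.2, f p.1)) (fun q _ => (f.symm q.2, f.symm q.1))
      ?_ ?_ ?_ ?_
    · rintro ⟨x, y⟩ hp
      simp only [Finset.mem_filter, Finset.mem_product, Finset.mem_compl] at hp ⊢
      obtain ⟨⟨hx, hy⟩, hadj⟩ := hp
      refine ⟨⟨(hcross' y).1 hy, fun hfxA => ((hcross x).1 hx) hfxA⟩, ?_⟩
      intro hadj'
      exact hadjf x y hadj hadj'.symm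
    · rintro ⟨x, y⟩ hq
      simp only [Finset.mem_filter, Finset.mem_product, Finset.mem_compl] at hq ⊢
      obtain ⟨⟨hx, hy⟩, hnadj⟩ := hq
      have hxy : x ≠ y := by rintro rfl; exact hy hx
      have hadj : G.Adj (f.symm y) (f.symm x) := hadjf' y x (Ne.symm hxy) (fun h => hnadj h.symm)
      refine ⟨⟨?_, ?_⟩, hadj⟩
      · have h2 := hcross (f.symm y)
        simp only [RelIso.apply_symm_apply] at h2
        exact h2.2 hy
      · have h2 := hcross (f.symm x)
        simp only [RelIso.apply_symm_apply] at h2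
        exact fun hmem => (h2.1 hmem) hx
    · rintro ⟨x, y⟩ hp; simp
    · rintro ⟨x, y⟩ hq; simp
  rw [crossCount]
  have hx := hsplit
  rw [← hbij] at hx
  rw [hprod] at hx
  have hgoal : 2*s*(2*s) = 4*(s*s) := by ring
  rw [hgoal] at hx
  have : 2*s*s = 2*(s*s) := by ring
  rw [this]
  omega

end SC
section Infra2
open Finset
set_option linter.unusedSectionVars false

variable {V : Type*} [Fintype V] [DecidableEq V]

lemma crossCount_eq_sum' (G : SimpleGraph V) [DecidableRel G.Adj] (A : Finset V) :
    crossCount G A = ∑ b ∈ Aᶜ, (A.filter fun a => G.Adj a b).card := by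
  rw [crossCount]
  rw [Finset.card_eq_sum_card_fiberwise (f := Prod.snd) (t := Aᶜ)
    (fun p hp => (Finset.mem_product.1 (Finset.mem_filter.1 hp).1).2)]
  refine Finset.sum_congr rfl fun b hb => ?_
  refine Finset.card_bij (fun p _ => p.1) ?_ ?_ ?_
  · rintro ⟨x, y⟩ hp
    simp only [Finset.mem_filter, Finset.mem_product] at hp
    rcases hp with ⟨⟨⟨hx, hy⟩, hadj⟩, rfl⟩
    simpa [hx] using hadj
  · rintro ⟨x, y⟩ hp ⟨x', y'⟩ hp' h
    simp only [Finset.mem_filter] at hp hp'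
    simp_all [Prod.ext_iff]
  · intro a ha
    simp only [Finset.mem_filter] at ha
    exact ⟨(a, b), by simp [ha.1, hb, ha.2], rfl⟩

end Infra2
section Switch
open Finset
set_option linter.unusedSectionVars false
set_option maxHeartbeats 1000000

variable {V : Type*} [Fintype V] [DecidableEq V]

/-- The graph obtained from `G` by removing edges `uv, xy` and adding `ux, vy`. -/
def switched (G : SimpleGraph V) (u v x y : V) : SimpleGraph V where
  Adj z w := (G.Adj z w ∧ ¬ (s(z,w) = s(u,v) ∨ s(z,w) = s(x,y) ∨ s(z,w) = s(u,x) ∨ s(z,w) = s(v,y)))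
    ∨ (¬ G.Adj z w ∧ z ≠ w ∧ (s(z,w) = s(u,v) ∨ s(z,w) = s(x,y) ∨ s(z,w) = s(u,x) ∨ s(z,w) = s(v,y)))
  symm := by
    refine ⟨fun z w h => ?_⟩
    rw [show s(w,z) = s(z,w) from Sym2.eq_swap, G.adj_comm w z, ne_comm]
    exact h
  loopless := by
    refine ⟨fun z h => ?_⟩
    rcases h with ⟨h1, _⟩ | ⟨_, h2, _⟩
    · exact G.irrefl h1
    · exact h2 rfl

instance switched_decAdj (G : SimpleGraph V) [DecidableRel G.Adj] (u v x y : V) :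
    DecidableRel (switched G u v x y).Adj := by
  intro z w
  unfold switched
  simp only
  infer_instance

lemma switched_adj (G : SimpleGraph V) (u v x y : V) (z w : V) :
    (switched G u v x y).Adj z w ↔
    ((G.Adj z w ∧ ¬ (s(z,w) = s(u,v) ∨ s(z,w) = s(x,y) ∨ s(z,w) = s(u,x) ∨ s(z,w) = s(v,y)))
    ∨ (¬ G.Adj z w ∧ z ≠ w ∧ (s(z,w) = s(u,v) ∨ s(z,w) = s(x,y) ∨ s(z,w) = s(u,x) ∨ s(z,w) = s(v,y)))) :=
  Iff.rfl

variable (G : SimpleGraph V) [DecidableRel G.Adj] (u v x y : V)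
variable (huv : G.Adj u v) (hxy : G.Adj x y) (hux : ¬ G.Adj u x) (hvy : ¬ G.Adj v y)
variable (hd_ux : u ≠ x) (hd_uy : u ≠ y) (hd_vx : v ≠ x) (hd_vy : v ≠ y)

section

include huv hxy hux hvy hd_ux hd_uy hd_vx hd_vy

lemma switched_nbr_other (z : V) (hzu : z ≠ u) (hzv : z ≠ v) (hzx : z ≠ x) (hzy : z ≠ y) (w : V) :
    (switched G u v x y).Adj z w ↔ G.Adj z w := by
  have h1 := G.ne_of_adj huv
  have h2 := G.ne_of_adj hxy
  simp only [switched_adj, Sym2.eq_iff]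
  aesop

lemma switched_nbr_u (w : V) :
    (switched G u v x y).Adj u w ↔ (w = x ∨ (G.Adj u w ∧ w ≠ v)) := by
  have h1 := G.ne_of_adj huv
  have h2 := G.ne_of_adj hxy
  simp only [switched_adj, Sym2.eq_iff]
  aesop

lemma switched_nbr_v (w : V) :
    (switched G u v x y).Adj v w ↔ (w = y ∨ (G.Adj v w ∧ w ≠ u)) := by
  have h1 := G.ne_of_adj huv
  have h2 := G.ne_of_adj hxy
  have hvu := huv.symm
  have hyx := hxy.symm
  have hxu : ¬ G.Adj x u := fun h => hux h.symm
  have hyv : ¬ G.Adj y v := fun h => hvy h.symm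
  simp only [switched_adj, Sym2.eq_iff]
  aesop

lemma switched_nbr_x (w : V) :
    (switched G u v x y).Adj x w ↔ (w = u ∨ (G.Adj x w ∧ w ≠ y)) := by
  have h1 := G.ne_of_adj huv
  have h2 := G.ne_of_adj hxy
  have hvu := huv.symm
  have hyx := hxy.symm
  have hxu : ¬ G.Adj x u := fun h => hux h.symm
  have hyv : ¬ G.Adj y v := fun h => hvy h.symm
  simp only [switched_adj, Sym2.eq_iff]
  aesop

lemma switched_nbr_y (w : V) :
    (switched G u v x y).Adj y w ↔ (w = v ∨ (G.Adj y w ∧ w ≠ x)) := by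
  have h1 := G.ne_of_adj huv
  have h2 := G.ne_of_adj hxy
  have hvu := huv.symm
  have hyx := hxy.symm
  have hxu : ¬ G.Adj x u := fun h => hux h.symm
  have hyv : ¬ G.Adj y v := fun h => hvy h.symm
  simp only [switched_adj, Sym2.eq_iff]
  aesop

end
end Switch
section Switch2
open Finset
set_option linter.unusedSectionVars false
set_option maxHeartbeats 1000000

variable {V : Type*} [Fintype V] [DecidableEq V]
variable (G : SimpleGraph V) [DecidableRel G.Adj] (u v x y : V)
variable (huv : G.Adj u v) (hxy : G.Adj x y) (hux : ¬ G.Adj u x) (hvy : ¬ G.Adj v y)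
variable (hd_ux : u ≠ x) (hd_uy : u ≠ y) (hd_vx : v ≠ x) (hd_vy : v ≠ y)

include huv hxy hux hvy hd_ux hd_uy hd_vx hd_vy

lemma switched_degree (z : V) : (switched G u v x y).degree z = G.degree z := by
  have key : ∀ (a b c : V), G.Adj a b → ¬ G.Adj a c → b ≠ c →
      (∀ w, ((switched G u v x y).Adj a w ↔ (w = c ∨ (G.Adj a w ∧ w ≠ b)))) →
      (switched G u v x y).degree a = G.degree a := by
    intro a b c hab hac hbc hiff
    have hset : (switched G u v x y).neighborFinset a
        = insert c ((G.neighborFinset a).erase b) := by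
      ext w
      simp only [mem_neighborFinset, hiff w, mem_insert, mem_erase]
      constructor
      · rintro (rfl | ⟨hadj, hne⟩)
        · exact Or.inl rfl
        · exact Or.inr ⟨hne, hadj⟩
      · rintro (rfl | ⟨hne, hadj⟩)
        · exact Or.inl rfl
        · exact Or.inr ⟨hadj, hne⟩
    rw [← card_neighborFinset_eq_degree, ← card_neighborFinset_eq_degree, hset]
    rw [card_insert_of_notMem (by simp [hac])]
    rw [card_erase_of_mem (by simp [hab])]
    have hpos : 0 < (G.neighborFinset a).card := card_pos.2 ⟨b, by simp [hab]⟩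
    omega
  by_cases hzu : z = u
  · subst hzu
    exact key z v x huv hux hd_vx (switched_nbr_u G z v x y huv hxy hux hvy hd_ux hd_uy hd_vx hd_vy)
  by_cases hzv : z = v
  · subst hzv
    exact key z u y huv.symm hvy hd_uy
      (switched_nbr_v G u z x y huv hxy hux hvy hd_ux hd_uy hd_vx hd_vy)
  by_cases hzx : z = x
  · subst hzx
    exact key z y u hxy (fun h => hux h.symm) (Ne.symm hd_uy)
      (switched_nbr_x G u v z y huv hxy hux hvy hd_ux hd_uy hd_vx hd_vy)
  by_cases hzy : z = y
  · subst hzy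
    exact key z x v hxy.symm (fun h => hvy h.symm) (Ne.symm hd_vx)
      (switched_nbr_y G u v x z huv hxy hux hvy hd_ux hd_uy hd_vx hd_vy)
  · have : (switched G u v x y).neighborFinset z = G.neighborFinset z := by
      ext w
      simp only [mem_neighborFinset]
      exact switched_nbr_other G u v x y huv hxy hux hvy hd_ux hd_uy hd_vx hd_vy z hzu hzv hzx hzy w
    rw [← card_neighborFinset_eq_degree, ← card_neighborFinset_eq_degree, this]

lemma switched_degMultiset : degMultiset (switched G u v x y) = degMultiset G := by
  rw [degMultiset_eq_s12, degMultiset_eq_s12]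
  exact Multiset.map_congr rfl
    (fun z _ => switched_degree G u v x y huv hxy hux hvy hd_ux hd_uy hd_vx hd_vy z)

lemma crossCount_switched_minus (A : Finset V) (hu : u ∈ A) (hx : x ∈ A)
    (hv : v ∉ A) (hy : y ∉ A) :
    crossCount (switched G u v x y) A + 2 = crossCount G A := by
  have hAdj' : ∀ a b : V, a ∈ A → b ∉ A →
      ((switched G u v x y).Adj a b ↔ (G.Adj a b ∧ ¬(a = u ∧ b = v) ∧ ¬(a = x ∧ b = y))) := by
    intro a b ha hb
    by_cases hau : a = u
    · subst hau
      rw [switched_nbr_u G a v x y huv hxy hux hvy hd_ux hd_uy hd_vx hd_vy b]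
      have hbx : b ≠ x := by rintro rfl; exact hb hx
      constructor
      · rintro (rfl | ⟨hadj, hbv⟩)
        · exact absurd rfl hbx
        · exact ⟨hadj, fun h => hbv h.2, fun h => hd_ux h.1⟩
      · rintro ⟨hadj, h1, h2⟩
        exact Or.inr ⟨hadj, fun hbv => h1 ⟨rfl, hbv⟩⟩
    by_cases hax : a = x
    · subst hax
      rw [switched_nbr_x G u v a y huv hxy hux hvy hd_ux hd_uy hd_vx hd_vy b]
      have hbu : b ≠ u := by rintro rfl; exact hb hu
      constructor
      · rintro (rfl | ⟨hadj, hby⟩)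
        · exact absurd rfl hbu
        · exact ⟨hadj, fun h => hau h.1, fun h => hby h.2⟩
      · rintro ⟨hadj, h1, h2⟩
        exact Or.inr ⟨hadj, fun hby => h2 ⟨rfl, hby⟩⟩
    · have hav : a ≠ v := by rintro rfl; exact hv ha
      have hay : a ≠ y := by rintro rfl; exact hy ha
      rw [switched_nbr_other G u v x y huv hxy hux hvy hd_ux hd_uy hd_vx hd_vy a hau hav hax hay b]
      exact ⟨fun h => ⟨h, fun hh => hau hh.1, fun hh => hax hh.1⟩, fun h => h.1⟩
  have hset : ((A ×ˢ Aᶜ).filter fun p => (switched G u v x y).Adj p.1 p.2)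
      = (((A ×ˢ Aᶜ).filter fun p => G.Adj p.1 p.2).erase (x,y)).erase (u,v) := by
    ext ⟨a, b⟩
    simp only [mem_erase, mem_filter, mem_product, mem_compl, ne_eq, Prod.mk.injEq]
    constructor
    · rintro ⟨⟨ha, hb⟩, hadj⟩
      rw [hAdj' a b ha hb] at hadj
      exact ⟨fun h => hadj.2.1 h, fun h => hadj.2.2 h, ⟨ha, hb⟩, hadj.1⟩
    · rintro ⟨h1, h2, ⟨ha, hb⟩, hadj⟩
      exact ⟨⟨ha, hb⟩, (hAdj' a b ha hb).2 ⟨hadj, h1, h2⟩⟩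
  rw [crossCount, crossCount, hset]
  have hmemxy : (x, y) ∈ ((A ×ˢ Aᶜ).filter fun p => G.Adj p.1 p.2) := by
    simp [hx, hy, hxy]
  have hmemuv : (u, v) ∈ (((A ×ˢ Aᶜ).filter fun p => G.Adj p.1 p.2).erase (x,y)) := by
    rw [mem_erase]
    refine ⟨by simp [hd_ux], by simp [hu, hv, huv]⟩
  rw [card_erase_of_mem hmemuv, card_erase_of_mem hmemxy]
  have h1 : 0 < ((A ×ˢ Aᶜ).filter fun p => G.Adj p.1 p.2).card := card_pos.2 ⟨_, hmemxy⟩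
  have h2 : 0 < (((A ×ˢ Aᶜ).filter fun p => G.Adj p.1 p.2).erase (x,y)).card :=
    card_pos.2 ⟨_, hmemuv⟩
  rw [card_erase_of_mem hmemxy] at h2
  omega

lemma crossCount_switched_plus (A : Finset V) (hu : u ∈ A) (hv : v ∈ A)
    (hx : x ∉ A) (hy : y ∉ A) :
    crossCount (switched G u v x y) A = crossCount G A + 2 := by
  have hAdj' : ∀ a b : V, a ∈ A → b ∉ A →
      ((switched G u v x y).Adj a b ↔ (G.Adj a b ∨ (a = u ∧ b = x) ∨ (a = v ∧ b = y))) := by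
    intro a b ha hb
    by_cases hau : a = u
    · subst hau
      rw [switched_nbr_u G a v x y huv hxy hux hvy hd_ux hd_uy hd_vx hd_vy b]
      have hbv : b ≠ v := by rintro rfl; exact hb hv
      constructor
      · rintro (rfl | ⟨hadj, _⟩)
        · exact Or.inr (Or.inl ⟨rfl, rfl⟩)
        · exact Or.inl hadj
      · rintro (hadj | ⟨_, rfl⟩ | ⟨hav, rfl⟩)
        · exact Or.inr ⟨hadj, hbv⟩
        · exact Or.inl rfl
        · exact absurd hav (G.ne_of_adj huv)
    by_cases hav : a = v
    · subst hav
      rw [switched_nbr_v G u a x y huv hxy hux hvy hd_ux hd_uy hd_vx hd_vy b]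
      have hbu : b ≠ u := by rintro rfl; exact hb hu
      constructor
      · rintro (rfl | ⟨hadj, _⟩)
        · exact Or.inr (Or.inr ⟨rfl, rfl⟩)
        · exact Or.inl hadj
      · rintro (hadj | ⟨hau', rfl⟩ | ⟨_, rfl⟩)
        · exact Or.inr ⟨hadj, hbu⟩
        · exact absurd hau' hau
        · exact Or.inl rfl
    · have hax : a ≠ x := by rintro rfl; exact hx ha
      have hay : a ≠ y := by rintro rfl; exact hy ha
      rw [switched_nbr_other G u v x y huv hxy hux hvy hd_ux hd_uy hd_vx hd_vy a hau hav hax hay b]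
      constructor
      · exact fun h => Or.inl h
      · rintro (h | ⟨rfl, rfl⟩ | ⟨rfl, rfl⟩)
        · exact h
        · exact absurd rfl hau
        · exact absurd rfl hav
  have hset : ((A ×ˢ Aᶜ).filter fun p => (switched G u v x y).Adj p.1 p.2)
      = insert (u,x) (insert (v,y) ((A ×ˢ Aᶜ).filter fun p => G.Adj p.1 p.2)) := by
    ext ⟨a, b⟩
    simp only [mem_insert, mem_filter, mem_product, mem_compl, Prod.mk.injEq]
    constructor
    · rintro ⟨⟨ha, hb⟩, hadj⟩
      rw [hAdj' a b ha hb] at hadj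
      rcases hadj with h | ⟨rfl, rfl⟩ | ⟨rfl, rfl⟩
      · exact Or.inr (Or.inr ⟨⟨ha, hb⟩, h⟩)
      · exact Or.inl ⟨rfl, rfl⟩
      · exact Or.inr (Or.inl ⟨rfl, rfl⟩)
    · rintro (⟨rfl, rfl⟩ | ⟨rfl, rfl⟩ | ⟨⟨ha, hb⟩, hadj⟩)
      · exact ⟨⟨hu, hx⟩, (hAdj' _ _ hu hx).2 (Or.inr (Or.inl ⟨rfl, rfl⟩))⟩
      · exact ⟨⟨hv, hy⟩, (hAdj' _ _ hv hy).2 (Or.inr (Or.inr ⟨rfl, rfl⟩))⟩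
      · exact ⟨⟨ha, hb⟩, (hAdj' _ _ ha hb).2 (Or.inl hadj)⟩
  rw [crossCount, crossCount, hset]
  have hvy' : (v, y) ∉ ((A ×ˢ Aᶜ).filter fun p => G.Adj p.1 p.2) := by
    simp only [mem_filter]; exact fun h => hvy h.2
  have hux' : (u, x) ∉ insert (v,y) ((A ×ˢ Aᶜ).filter fun p => G.Adj p.1 p.2) := by
    simp only [mem_insert, mem_filter, Prod.mk.injEq]
    rintro (⟨h1, h2⟩ | h)
    · exact G.ne_of_adj huv h1
    · exact hux h.2
  rw [card_insert_of_notMem hux', card_insert_of_notMem hvy']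

end Switch2
section Core
open Finset
set_option linter.unusedSectionVars false
set_option maxHeartbeats 1600000

/-- The key combinatorial lemma: with the given degree structure and exactly half of all
crossing pairs being edges, some degree-preserving 2-switch changing the crossing count
exists. -/
lemma core_switch {V : Type*} [Fintype V] [DecidableEq V] (G : SimpleGraph V)
    [DecidableRel G.Adj] (s E : ℕ) (hs : 2 ≤ s) (hE : 1 ≤ E)
    (A : Finset V)
    (hAcard : A.card = 2*s) (hBcard : (Aᶜ : Finset V).card = 2*s)
    (hdegA : ∀ a ∈ A, G.degree a = 2*s+E ∨ G.degree a + 1 = 2*s+E)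
    (hdegB : ∀ b ∈ (Aᶜ : Finset V), G.degree b + E = 2*s ∨ G.degree b + E + 1 = 2*s)
    (hhigh2 : 2 ≤ (A.filter fun a => G.degree a = 2*s+E).card)
    (hhigh2' : (A.filter fun a => G.degree a = 2*s+E).card + 2 ≤ 2*s)
    (ht : crossCount G A = 2*s*s) :
    ∃ u v x y : V, G.Adj u v ∧ G.Adj x y ∧ ¬G.Adj u x ∧ ¬G.Adj v y ∧
      u ≠ x ∧ v ≠ y ∧
      ((u ∈ A ∧ x ∈ A ∧ v ∉ A ∧ y ∉ A) ∨ (u ∈ A ∧ v ∈ A ∧ x ∉ A ∧ y ∉ A)) := by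
  by_contra hno
  -- notation
  set cA : V → ℕ := fun v => ((G.neighborFinset v).filter (fun w => w ∈ A)).card with hcAdef
  set cB : V → ℕ := fun v => ((G.neighborFinset v).filter (fun w => w ∉ A)).card with hcBdef
  set NB : V → Finset V := fun v => (G.neighborFinset v).filter (fun w => w ∉ A) with hNBdef
  set MA : V → Finset V := fun b => A.filter (fun w => ¬ G.Adj b w) with hMAdef
  set nnA : V → Finset V := fun a => A.filter (fun w => ¬ G.Adj a w ∧ w ≠ a) with hnnAdef
  have hdegB' : ∀ b, b ∉ A → G.degree b + E = 2*s ∨ G.degree b + E + 1 = 2*s := by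
    intro b hb; exact hdegB b (Finset.mem_compl.2 hb)
  -- degree splits into A-part and B-part
  have hsplit : ∀ v, cA v + cB v = G.degree v := by
    intro v
    rw [hcAdef, hcBdef]
    rw [← card_neighborFinset_eq_degree]
    exact Finset.card_filter_add_card_filter_not (p := fun w => w ∈ A)
  -- membership lemmas
  have hmemNB : ∀ v w, w ∈ NB v ↔ (G.Adj v w ∧ w ∉ A) := by
    intro v w; rw [hNBdef]; simp [Finset.mem_filter, mem_neighborFinset]
  have hcB_NB : ∀ v, (NB v).card = cB v := by intro v; rw [hNBdef, hcBdef]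
  have hmemMA : ∀ b w, w ∈ MA b ↔ (w ∈ A ∧ ¬ G.Adj b w) := by
    intro b w; rw [hMAdef]; simp [Finset.mem_filter]
  have hmemnnA : ∀ a w, w ∈ nnA a ↔ (w ∈ A ∧ ¬ G.Adj a w ∧ w ≠ a) := by
    intro a w; rw [hnnAdef]; simp [Finset.mem_filter]
  -- counting A-nonneighbours of a vertex of B
  have hNA : ∀ b, cA b + (MA b).card = 2*s := by
    intro b
    have h1 : (G.neighborFinset b).filter (fun w => w ∈ A) = A.filter (fun w => G.Adj b w) := by
      ext w
      simp only [Finset.mem_filter, mem_neighborFinset]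
      tauto
    rw [hcAdef]
    simp only
    rw [h1, hMAdef]
    simp only
    rw [Finset.card_filter_add_card_filter_not (p := fun w => G.Adj b w), hAcard]
  -- counting A-nonneighbours of a vertex of A
  have hnnAc : ∀ a ∈ A, cA a + (nnA a).card + 1 = 2*s := by
    intro a ha
    have h0 : (A.erase a).card + 1 = 2*s := by
      rw [Finset.card_erase_of_mem ha, hAcard]
      omega
    have h1 : (A.erase a).filter (fun w => G.Adj a w) = A.filter (fun w => G.Adj a w) := by
      ext w
      simp only [Finset.mem_filter, Finset.mem_erase]
      constructor
      · rintro ⟨⟨_, hw⟩, hadj⟩; exact ⟨hw, hadj⟩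
      · rintro ⟨hw, hadj⟩; exact ⟨⟨(G.ne_of_adj hadj).symm, hw⟩, hadj⟩
    have h2 : (A.erase a).filter (fun w => ¬ G.Adj a w) = nnA a := by
      ext w
      rw [hmemnnA]
      simp only [Finset.mem_filter, Finset.mem_erase]
      tauto
    have h3 : cA a = (A.filter (fun w => G.Adj a w)).card := by
      rw [hcAdef]
      simp only
      congr 1
      ext w
      simp only [Finset.mem_filter, mem_neighborFinset]
      tauto
    have h4 := Finset.card_filter_add_card_filter_not (s := A.erase a)
      (p := fun w => G.Adj a w)
    rw [h1, h2] at h4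
    omega
  -- the two expressions for the crossing count
  have tsumA : ∑ a ∈ A, cB a = 2*s*s := by
    rw [← ht, crossCount_eq_sum]
    refine Finset.sum_congr rfl fun a _ => ?_
    rw [hcBdef]
    simp only
    congr 1
    ext w
    simp only [Finset.mem_filter, mem_neighborFinset, Finset.mem_compl]
    tauto
  have tsumB : ∑ b ∈ Aᶜ, cA b = 2*s*s := by
    rw [← ht, crossCount_eq_sum']
    refine Finset.sum_congr rfl fun b _ => ?_
    rw [hcAdef]
    simp only
    congr 1
    ext w
    simp only [Finset.mem_filter, mem_neighborFinset]
    constructor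
    · rintro ⟨hadj, hw⟩; exact ⟨hw, hadj.symm⟩
    · rintro ⟨hw, hadj⟩; exact ⟨hadj.symm, hw⟩
  -- Rule I : no (−2)-switch
  have ruleI : ∀ p ∈ A, ∀ q ∈ A, p ≠ q → ¬ G.Adj p q → ∀ b1 b2 : V, b1 ∉ A → b2 ∉ A →
      b1 ≠ b2 → G.Adj p b1 → G.Adj q b2 → G.Adj b1 b2 := by
    intro p hp q hq hpq hnadj b1 b2 hb1 hb2 hb12 hpb1 hqb2
    by_contra hnb
    exact hno ⟨p, b1, q, b2, hpb1, hqb2, hnadj, hnb, hpq, hb12, Or.inl ⟨hp, hq, hb1, hb2⟩⟩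
  -- Rule II : no (+2)-switch
  have ruleII : ∀ b1 b2 : V, b1 ∉ A → b2 ∉ A → G.Adj b1 b2 → ∀ p q, p ∈ A → q ∈ A → p ≠ q →
      ¬ G.Adj b1 p → ¬ G.Adj b2 q → ¬ G.Adj p q := by
    intro b1 b2 hb1 hb2 hadj p q hp hq hpq hnb1p hnb2q hpq'
    have hpb1 : p ≠ b1 := by rintro rfl; exact hb1 hp
    have hqb2 : q ≠ b2 := by rintro rfl; exact hb2 hq
    exact hno ⟨p, q, b1, b2, hpq', hadj, fun h => hnb1p h.symm, fun h => hnb2q h.symm,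
      hpb1, hqb2, Or.inr ⟨hp, hq, hb1, hb2⟩⟩
  -- Case distinction: is A complete?
  by_cases hcomp : ∀ p ∈ A, ∀ q ∈ A, p ≠ q → G.Adj p q
  · -- A complete: arithmetic contradiction
    set K : ℕ := (A.filter fun a => G.degree a = 2*s+E).card with hK
    -- every a ∈ A has cA a + 1 = 2s
    have hfull : ∀ a ∈ A, cA a + 1 = 2*s := by
      intro a ha
      have hempty : nnA a = ∅ := by
        rw [Finset.eq_empty_iff_forall_notMem]
        intro w hw
        rw [hmemnnA] at hw
        exact hw.2.1 (hcomp a ha w hw.1 (Ne.symm hw.2.2))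
      have := hnnAc a ha
      rw [hempty] at this
      simp at this
      omega
    -- sum of degrees over A
    have hsum1 : ∑ a ∈ A, (cA a + cB a) = ∑ a ∈ A, G.degree a :=
      Finset.sum_congr rfl (fun a _ => hsplit a)
    have hsum2 : ∑ a ∈ A, (cA a + 1) = 2*s*(2*s) := by
      rw [Finset.sum_congr rfl (fun a ha => by rw [hfull a ha] : ∀ a ∈ A, cA a + 1 = 2*s)]
      rw [Finset.sum_const, hAcard, smul_eq_mul]
    have hsum3 : (∑ a ∈ A, G.degree a) + 2*s = 2*s*(2*s+E) + K := by
      have hsplitA := Finset.sum_filter_add_sum_filter_not A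
        (fun a => G.degree a = 2*s+E) (fun a => G.degree a + 1)
      have hhi : ∑ a ∈ A.filter (fun a => G.degree a = 2*s+E), (G.degree a + 1)
          = K * (2*s+E+1) := by
        rw [Finset.sum_congr rfl (fun a ha => by
          rw [(Finset.mem_filter.1 ha).2] : ∀ a ∈ A.filter (fun a => G.degree a = 2*s+E),
            G.degree a + 1 = 2*s+E+1)]
        rw [Finset.sum_const, smul_eq_mul, hK]
      have hlo : ∑ a ∈ A.filter (fun a => ¬ G.degree a = 2*s+E), (G.degree a + 1)
          = (A.filter (fun a => ¬ G.degree a = 2*s+E)).card * (2*s+E) := by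
        rw [Finset.sum_congr rfl (fun a ha => by
          have h1 := Finset.mem_filter.1 ha
          rcases hdegA a h1.1 with h | h
          · exact absurd h h1.2
          · rw [h] : ∀ a ∈ A.filter (fun a => ¬ G.degree a = 2*s+E), G.degree a + 1 = 2*s+E)]
        rw [Finset.sum_const, smul_eq_mul]
      have hcards := Finset.card_filter_add_card_filter_not (s := A)
        (p := fun a => G.degree a = 2*s+E)
      rw [hAcard] at hcards
      set L : ℕ := (A.filter (fun a => ¬ G.degree a = 2*s+E)).card with hL
      have hsum4 : ∑ a ∈ A, (G.degree a + 1) = K * (2*s+E+1) + L * (2*s+E) := by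
        rw [← hsplitA, hhi, hlo]
      rw [Finset.sum_add_distrib, Finset.sum_const, smul_eq_mul, hAcard, mul_one] at hsum4
      have hexp : K * (2*s+E+1) + L * (2*s+E) = (K + L) * (2*s+E) + K := by ring
      rw [hexp] at hsum4
      have hKL : K + L = 2*s := hcards
      rw [hKL] at hsum4
      have : 2*s*(2*s+E) = (2*s)*(2*s+E) := by ring
      omega
    rw [Finset.sum_add_distrib] at hsum1 hsum2
    -- now: ΣcA + ΣcB = Σdeg, ΣcA + 2s = 4s², ΣcB = 2s², Σdeg + 2s = 2s(2s+E)+K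
    have hp1 : 2*s*(2*s+E) = 2*s*(2*s) + 2*s*E := by ring
    have hp2 : 2*s*(2*s) = 2*(2*s*s) := by ring
    rw [Finset.sum_const, hAcard, smul_eq_mul, mul_one] at hsum2
    -- conclude 2sE + K = 2s²
    have hfinal : 2*s*E + K = 2*s*s := by omega
    rcases le_or_gt s E with hse | hse
    · have : 2*s*s ≤ 2*s*E := Nat.mul_le_mul_left _ hse
      omega
    · have h5 : E + 1 ≤ s := hse
      have : 2*s*(E+1) ≤ 2*s*s := Nat.mul_le_mul_left _ h5
      have hq : 2*s*(E+1) = 2*s*E + 2*s := by ring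
      omega
  · -- A is not complete
    push_neg at hcomp
    obtain ⟨p0, hp0, q0, hq0, hpq0, hnadj0⟩ := hcomp
    set Z : Finset V := A.filter (fun a => ∃ a' ∈ A, a' ≠ a ∧ ¬ G.Adj a a') with hZdef
    have hmemZ : ∀ z, z ∈ Z ↔ (z ∈ A ∧ ∃ a' ∈ A, a' ≠ z ∧ ¬ G.Adj z a') := by
      intro z; rw [hZdef]; simp [Finset.mem_filter]
    have hZne : Z.Nonempty := ⟨p0, (hmemZ p0).2 ⟨hp0, q0, hq0, hpq0.symm,
      fun h => hnadj0 h⟩⟩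
    have hZcB : ∀ z ∈ Z, E + 1 ≤ cB z := by
      intro z hz
      obtain ⟨hzA, a', ha'A, ha'ne, ha'nadj⟩ := (hmemZ z).1 hz
      have h1 : 1 ≤ (nnA z).card := by
        rw [Nat.one_le_iff_ne_zero, ← Nat.pos_iff_ne_zero, Finset.card_pos]
        exact ⟨a', (hmemnnA z a').2 ⟨ha'A, ha'nadj, ha'ne⟩⟩
      have h2 := hnnAc z hzA
      have h3 := hsplit z
      rcases hdegA z hzA with h4 | h4 <;> omega
    obtain ⟨a1, ha1Z, hmax⟩ := Finset.exists_max_image Z cB hZne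
    set al : ℕ := cB a1 with haldef
    have ha1A : a1 ∈ A := ((hmemZ a1).1 ha1Z).1
    obtain ⟨a2, ha2A, ha2ne, ha2nadj⟩ := ((hmemZ a1).1 ha1Z).2
    have haE : E + 1 ≤ al := hZcB a1 ha1Z
    have ha2Z : a2 ∈ Z := (hmemZ a2).2 ⟨ha2A, a1, ha1A, ha2ne.symm, fun h => ha2nadj h.symm⟩
    -- The central derivation.
    have main : ∀ p ∈ A, ∀ q ∈ A, p ≠ q → ¬ G.Adj p q → cB p = al →
        ∀ b2 ∈ NB q, ∀ b1 ∈ (NB p).erase b2, ∀ x ∈ MA b1,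
        E = 1 ∧ b2 ∈ NB p ∧ x ∈ MA b2 ∧ cB x = al ∧ G.degree x + 1 = 2*s+E ∧
        (MA b2).card = al ∧ nnA x = (MA b2).erase x := by
      intro p hp q hq hpq hnadj hcBp b2 hb2 b1 hb1 x hx
      obtain ⟨hqb2, hb2A⟩ := (hmemNB q b2).1 hb2
      obtain ⟨hb1ne, hb1NB⟩ := Finset.mem_erase.1 hb1
      obtain ⟨hpb1, hb1A⟩ := (hmemNB p b1).1 hb1NB
      obtain ⟨hxA, hnb1x⟩ := (hmemMA b1 x).1 hx
      have hedge : G.Adj b1 b2 := ruleI p hp q hq hpq hnadj b1 b2 hb1A hb2A hb1ne hpb1 hqb2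
      -- step 2 : all of (NB p).erase b2 are neighbours of b2
      have hsub1 : (NB p).erase b2 ⊆ NB b2 := by
        intro w hw
        obtain ⟨hwne, hwNB⟩ := Finset.mem_erase.1 hw
        obtain ⟨hpw, hwA⟩ := (hmemNB p w).1 hwNB
        have := ruleI p hp q hq hpq hnadj w b2 hwA hb2A hwne hpw hqb2
        exact (hmemNB b2 w).2 ⟨this.symm, hwA⟩
      -- step 5 : all of (MA b2).erase x are non-neighbours of x
      have hsubMA : (MA b2).erase x ⊆ nnA x := by
        intro w hw
        obtain ⟨hwne, hwMA⟩ := Finset.mem_erase.1 hw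
        obtain ⟨hwA, hnb2w⟩ := (hmemMA b2 w).1 hwMA
        have hnxw : ¬ G.Adj x w :=
          ruleII b1 b2 hb1A hb2A hedge x w hxA hwA (Ne.symm hwne) hnb1x hnb2w
        exact (hmemnnA x w).2 ⟨hwA, hnxw, hwne⟩
      -- numeric facts
      have hMb2 := hNA b2
      have hsplitb2 := hsplit b2
      have hdegb2 := hdegB' b2 hb2A
      have hnnx := hnnAc x hxA
      have hsplitx := hsplit x
      have hdegx := hdegA x hxA
      have hcb2low : (b2 ∈ NB p → al ≤ cB b2 + 1) ∧ (b2 ∉ NB p → al ≤ cB b2) := by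
        constructor
        · intro hmem
          have h1 : ((NB p).erase b2).card + 1 = al := by
            rw [Finset.card_erase_of_mem hmem, hcB_NB, hcBp]
            omega
          have h2 := Finset.card_le_card hsub1
          rw [hcB_NB] at h2
          omega
        · intro hmem
          have h1 : ((NB p).erase b2).card = al := by
            rw [Finset.erase_eq_of_notMem hmem, hcB_NB, hcBp]
          have h2 := Finset.card_le_card hsub1
          rw [hcB_NB] at h2
          omega
      -- |MA b2| is at least 2
      have hMb2ge2 : 2 ≤ (MA b2).card := by
        rcases Classical.em (b2 ∈ NB p) with h | h
        · have := hcb2low.1 h; rcases hdegb2 with h' | h' <;> omega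
        · have := hcb2low.2 h; rcases hdegb2 with h' | h' <;> omega
      -- nnA x is nonempty, so x ∈ Z and cB x ≤ al
      have hnnxge : (MA b2).card ≤ (nnA x).card + 1 := by
        have h2 := Finset.card_le_card hsubMA
        rcases Classical.em (x ∈ MA b2) with h | h
        · rw [Finset.card_erase_of_mem h] at h2; omega
        · rw [Finset.erase_eq_of_notMem h] at h2; omega
      have hxZ : x ∈ Z := by
        have h1 : 1 ≤ (nnA x).card := by omega
        obtain ⟨w, hw⟩ := Finset.card_pos.1 (show 0 < (nnA x).card by omega)
        obtain ⟨hwA, hnxw, hwne⟩ := (hmemnnA x w).1 hw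
        exact (hmemZ x).2 ⟨hxA, w, hwA, hwne, hnxw⟩
      have hxle : cB x ≤ al := hmax x hxZ
      -- the tight chain.  First the two indicator cases must be positive:
      have hi1 : b2 ∈ NB p := by
        by_contra hi1
        have h1 := hcb2low.2 hi1
        have h2 : (MA b2).card ≤ (nnA x).card + 1 := hnnxge
        rcases hdegx with h | h <;> rcases hdegb2 with h' | h' <;> omega
      have hi2 : x ∈ MA b2 := by
        by_contra hi2
        have h1 := hcb2low.1 hi1
        have h2 := Finset.card_le_card hsubMA
        rw [Finset.erase_eq_of_notMem hi2] at h2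
        rcases hdegx with h | h <;> rcases hdegb2 with h' | h' <;> omega
      have h1 := hcb2low.1 hi1
      have h2 := Finset.card_le_card hsubMA
      rw [Finset.card_erase_of_mem hi2] at h2
      have hE1 : E = 1 := by
        rcases hdegx with h | h <;> rcases hdegb2 with h' | h' <;> omega
      have hdegxeq : G.degree x + 1 = 2*s+E := by
        rcases hdegx with h | h <;> rcases hdegb2 with h' | h' <;> omega
      have hcBxeq : cB x = al := by
        rcases hdegx with h | h <;> rcases hdegb2 with h' | h' <;> omega
      have hMb2card : (MA b2).card = al := by
        rcases hdegx with h | h <;> rcases hdegb2 with h' | h' <;> omega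
      have hnnAeq : nnA x = (MA b2).erase x := by
        refine (Finset.eq_of_subset_of_card_le hsubMA ?_).symm
        rw [Finset.card_erase_of_mem hi2]
        rcases hdegx with h | h <;> omega
      exact ⟨hE1, hi1, hi2, hcBxeq, hdegxeq, hMb2card, hnnAeq⟩
    -- MA of any vertex outside A is nonempty
    have hMAne : ∀ b1, b1 ∉ A → ∃ x, x ∈ MA b1 := by
      intro b1 hb1A
      have h1 := hNA b1
      have h2 := hsplit b1
      have h3 := hdegB' b1 hb1A
      have : 0 < (MA b1).card := by rcases h3 with h | h <;> omega
      obtain ⟨x, hx⟩ := Finset.card_pos.1 this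
      exact ⟨x, hx⟩
    -- structure of a pair of nonadjacent vertices of A with maximal crossing degree
    have pairNB : ∀ p ∈ A, ∀ q ∈ A, p ≠ q → ¬ G.Adj p q → cB p = al → q ∈ Z →
        NB p = NB q ∧ (∀ b2 ∈ NB q, ∀ b2' ∈ NB q, MA b2 = MA b2') := by
      intro p hp q hq hpq hnadj hcBp hqZ
      have hcBq : E + 1 ≤ cB q := hZcB q hqZ
      have hsub1 : NB q ⊆ NB p := by
        intro b2 hb2
        obtain ⟨b1, hb1⟩ := Finset.card_pos.1 (show 0 < ((NB p).erase b2).card by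
          have := Finset.pred_card_le_card_erase (s := NB p) (a := b2)
          rw [hcB_NB] at this
          omega)
        have hb1A : b1 ∉ A := ((hmemNB p b1).1 (Finset.mem_erase.1 hb1).2).2
        obtain ⟨x, hxmem⟩ := hMAne b1 hb1A
        exact (main p hp q hq hpq hnadj hcBp b2 hb2 b1 hb1 x hxmem).2.1
      have hMAeq : ∀ b2 ∈ NB q, ∀ b2' ∈ NB q, MA b2 = MA b2' := by
        have key : ∀ b2 ∈ NB q, ∀ b2' ∈ NB q, b2 ≠ b2' → MA b2' ⊆ MA b2 := by
          intro b2 hb2 b2' hb2' hne x hx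
          have hb2'p : b2' ∈ (NB p).erase b2 := Finset.mem_erase.2 ⟨hne.symm, hsub1 hb2'⟩
          exact (main p hp q hq hpq hnadj hcBp b2 hb2 b2' hb2'p x hx).2.2.1
        intro b2 hb2 b2' hb2'
        rcases eq_or_ne b2 b2' with rfl | hne
        · rfl
        · exact Finset.Subset.antisymm (key b2' hb2' b2 hb2 hne.symm) (key b2 hb2 b2' hb2' hne)
      have hsub2 : NB p ⊆ NB q := by
        intro b1 hb1
        by_contra hb1q
        obtain ⟨hpb1, hb1A⟩ := (hmemNB p b1).1 hb1
        have hnqb1 : ¬ G.Adj q b1 := fun h => hb1q ((hmemNB q b1).2 ⟨h, hb1A⟩)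
        obtain ⟨b2, hb2e⟩ := Finset.card_pos.1 (show 0 < ((NB q).erase b1).card by
          have := Finset.pred_card_le_card_erase (s := NB q) (a := b1)
          rw [hcB_NB] at this
          omega)
        obtain ⟨hb2ne, hb2⟩ := Finset.mem_erase.1 hb2e
        have hb1e : b1 ∈ (NB p).erase b2 := Finset.mem_erase.2 ⟨hb2ne.symm, hb1⟩
        have hqMA : q ∈ MA b1 := (hmemMA b1 q).2 ⟨hq, fun h => hnqb1 h.symm⟩
        have hconc := (main p hp q hq hpq hnadj hcBp b2 hb2 b1 hb1e q hqMA).2.2.1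
        obtain ⟨hqb2, _⟩ := (hmemNB q b2).1 hb2
        exact ((hmemMA b2 q).1 hconc).2 hqb2.symm
      exact ⟨Finset.Subset.antisymm hsub2 hsub1, hMAeq⟩
    -- instantiate with the pair (a1, a2)
    have hnadj21 : ¬ G.Adj a1 a2 := ha2nadj
    obtain ⟨hNB12, hMA2⟩ := pairNB a1 ha1A a2 ha2A ha2ne.symm hnadj21 rfl ha2Z
    have hcBa2 : cB a2 = al := by
      rw [← hcB_NB, ← hNB12, hcB_NB]
    have hNBa2pos : 0 < (NB a2).card := by rw [hcB_NB, hcBa2]; omega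
    obtain ⟨b20, hb20⟩ := Finset.card_pos.1 hNBa2pos
    obtain ⟨b2', hb2', hb2'ne⟩ := Finset.exists_mem_ne
      (by rw [hcB_NB, hcBa2]; omega) b20
    have hb20e : b20 ∈ (NB a1).erase b2' := by
      rw [Finset.mem_erase, hNB12]
      exact ⟨fun h => hb2'ne h.symm, hb20⟩
    have hMA2' : MA b2' = MA b20 := hMA2 b2' hb2' b20 hb20
    -- the first cluster
    have hMstarprop : ∀ x ∈ MA b20, E = 1 ∧ cB x = al ∧ G.degree x + 1 = 2*s+E ∧
        (MA b20).card = al ∧ nnA x = (MA b20).erase x := by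
      intro x hx
      have := main a1 ha1A a2 ha2A ha2ne.symm hnadj21 rfl b2' hb2' b20 hb20e x hx
      obtain ⟨hE1, _, hxb2', hcBx, hdegx, hcard, hnn⟩ := this
      rw [hMA2'] at hcard hnn
      exact ⟨hE1, hcBx, hdegx, hcard, hnn⟩
    obtain ⟨xw, hxw⟩ := hMAne b20 ((hmemNB a2 b20).1 hb20).2
    have hE1 : E = 1 := (hMstarprop xw hxw).1
    have hMstarcard : (MA b20).card = al := (hMstarprop xw hxw).2.2.2.1
    -- two distinct members of the first cluster
    obtain ⟨x0, hx0M, x0', hx0'M, hx00⟩ := Finset.one_lt_card.1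
      (show 1 < (MA b20).card by rw [hMstarcard]; omega)
    have hx0A : x0 ∈ A := ((hmemMA b20 x0).1 hx0M).1
    have hx0'A : x0' ∈ A := ((hmemMA b20 x0').1 hx0'M).1
    have hx0'nn : x0' ∈ nnA x0 := by
      rw [(hMstarprop x0 hx0M).2.2.2.2]
      exact Finset.mem_erase.2 ⟨fun h => hx00 h.symm, hx0'M⟩
    obtain ⟨_, hnadjx, hx0'nex0⟩ := (hmemnnA x0 x0').1 hx0'nn
    have hx0'Z : x0' ∈ Z := (hmemZ x0').2 ⟨hx0'A, x0, hx0A, fun h => hx0'nex0 h.symm,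
      fun h => hnadjx h.symm⟩
    have hcBx0 : cB x0 = al := (hMstarprop x0 hx0M).2.1
    -- instantiate with the pair (x0, x0')
    obtain ⟨hNBxx, hMA2x⟩ := pairNB x0 hx0A x0' hx0'A (fun h => hx0'nex0 h.symm) hnadjx
      hcBx0 hx0'Z
    have hcBx0' : cB x0' = al := by rw [← hcB_NB, ← hNBxx, hcB_NB, hcBx0]
    obtain ⟨b30, hb30⟩ := Finset.card_pos.1 (show 0 < (NB x0').card by
      rw [hcB_NB, hcBx0']; omega)
    obtain ⟨b3', hb3', hb3'ne⟩ := Finset.exists_mem_ne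
      (by rw [hcB_NB, hcBx0']; omega) b30
    have hb30e : b30 ∈ (NB x0).erase b3' := by
      rw [Finset.mem_erase, hNBxx]
      exact ⟨fun h => hb3'ne h.symm, hb30⟩
    have hMA3' : MA b3' = MA b30 := hMA2x b3' hb3' b30 hb30
    have hM2prop : ∀ y ∈ MA b30, cB y = al ∧ G.degree y + 1 = 2*s+E ∧
        (MA b30).card = al ∧ nnA y = (MA b30).erase y := by
      intro y hy
      have := main x0 hx0A x0' hx0'A (fun h => hx0'nex0 h.symm) hnadjx hcBx0
        b3' hb3' b30 hb30e y hy
      obtain ⟨_, _, hyb3', hcBy, hdegy, hcard, hnn⟩ := this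
      rw [hMA3'] at hcard hnn
      exact ⟨hcBy, hdegy, hcard, hnn⟩
    -- the two clusters are distinct and disjoint
    have hx0nM2 : x0 ∉ MA b30 := by
      intro h
      have hb30x0 : G.Adj x0 b30 := by
        have : b30 ∈ NB x0 := hNBxx ▸ hb30
        exact ((hmemNB x0 b30).1 this).1
      exact ((hmemMA b30 x0).1 h).2 hb30x0.symm
    have hMne : MA b20 ≠ MA b30 := fun h => hx0nM2 (h ▸ hx0M)
    have hMdisj : ∀ y, y ∈ MA b20 → y ∈ MA b30 → False := by
      intro y hy1 hy2
      have e1 : nnA y = (MA b20).erase y := (hMstarprop y hy1).2.2.2.2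
      have e2 : nnA y = (MA b30).erase y := (hM2prop y hy2).2.2.2
      apply hMne
      rw [← Finset.insert_erase hy1, ← Finset.insert_erase hy2, ← e1, ← e2]
    have hNBdisj : Disjoint (NB a2) (NB x0') := by
      rw [Finset.disjoint_left]
      intro b hb1 hb2
      have e1 : MA b = MA b20 := hMA2 b hb1 b20 hb20
      have e2 : MA b = MA b30 := hMA2x b hb2 b30 hb30
      exact hMne (e1 ▸ e2)
    -- a vertex of maximal degree gives the contradiction
    obtain ⟨v, hvmem⟩ := Finset.card_pos.1 (show 0 <
      (A.filter fun a => G.degree a = 2*s+E).card by omega)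
    obtain ⟨hvA, hvdeg⟩ := Finset.mem_filter.1 hvmem
    have hvnM : v ∉ MA b20 := by
      intro h
      have := (hMstarprop v h).2.2.1
      omega
    have hvnM2 : v ∉ MA b30 := by
      intro h
      have := (hM2prop v h).2.1
      omega
    have hsubv : NB a2 ∪ NB x0' ⊆ NB v := by
      intro b hb
      rcases Finset.mem_union.1 hb with hb | hb
      · have hbA : b ∉ A := ((hmemNB a2 b).1 hb).2
        have e1 : MA b = MA b20 := hMA2 b hb b20 hb20
        have hadj : G.Adj b v := by
          by_contra hnadj
          exact hvnM (e1 ▸ (hmemMA b v).2 ⟨hvA, hnadj⟩)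
        exact (hmemNB v b).2 ⟨hadj.symm, hbA⟩
      · have hbA : b ∉ A := ((hmemNB x0' b).1 hb).2
        have e2 : MA b = MA b30 := hMA2x b hb b30 hb30
        have hadj : G.Adj b v := by
          by_contra hnadj
          exact hvnM2 (e2 ▸ (hmemMA b v).2 ⟨hvA, hnadj⟩)
        exact (hmemNB v b).2 ⟨hadj.symm, hbA⟩
    have hcBv : 2*al ≤ cB v := by
      have h1 := Finset.card_le_card hsubv
      rw [Finset.card_union_of_disjoint hNBdisj, hcB_NB, hcB_NB, hcB_NB, hcBa2, hcBx0'] at h1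
      omega
    by_cases hvZ : v ∈ Z
    · have := hmax v hvZ
      omega
    · have hnn0 : (nnA v).card = 0 := by
        by_contra h
        obtain ⟨w, hw⟩ := Finset.card_pos.1 (Nat.pos_of_ne_zero h)
        obtain ⟨hwA, hnvw, hwne⟩ := (hmemnnA v w).1 hw
        exact hvZ ((hmemZ v).2 ⟨hvA, w, hwA, hwne, hnvw⟩)
      have h1 := hnnAc v hvA
      have h2 := hsplit v
      omega

lemma main_aux {V : Type*} [Fintype V] [DecidableEq V] (k1 k2 d : ℕ)
    (hk1 : 0 < k1) (hk2 : 0 < k2)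
    (hd : 4 * (k1 + k2) - d < d - 1)
    (hV : Fintype.card V = 4*(k1+k2))
    (G : SimpleGraph V)
    (hG : degMultiset G =
      Multiset.replicate (2 * k1) d + Multiset.replicate (2 * k2) (d - 1) +
      Multiset.replicate (2 * k2) (4 * (k1 + k2) - d) +
      Multiset.replicate (2 * k1) (4 * (k1 + k2) - 1 - d)) :
    ∃ G' : SimpleGraph V, (degMultiset G' =
      Multiset.replicate (2 * k1) d + Multiset.replicate (2 * k2) (d - 1) +
      Multiset.replicate (2 * k2) (4 * (k1 + k2) - d) +
      Multiset.replicate (2 * k1) (4 * (k1 + k2) - 1 - d)) ∧ ¬ IsSelfCompl G' := by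
  classical
  letI : DecidableRel G.Adj := Classical.decRel _
  by_cases hsc : IsSelfCompl G
  swap
  · exact ⟨G, hG, hsc⟩
  set s : ℕ := k1 + k2 with hsdef
  have hs : 2 ≤ s := by omega
  -- every vertex's degree is at most 4s - 1
  have hdeglt : ∀ v : V, G.degree v + 1 ≤ 4*s := by
    intro v
    have := G.degree_lt_card_verts v
    omega
  -- count of each degree value
  have hcount : ∀ c : ℕ, (Finset.univ.filter fun v : V => G.degree v = c).card
      = Multiset.count c (degMultiset G) := by
    intro c
    rw [degMultiset_eq_s12, Multiset.count_map]
    have h := Multiset.filter_congr (s := Finset.univ.val)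
      (p := fun a => c = G.degree a) (q := fun a => G.degree a = c) (fun v _ => eq_comm)
    rw [h]
    rfl
  set τ : Multiset ℕ :=
    Multiset.replicate (2 * k1) d + Multiset.replicate (2 * k2) (d - 1) +
    Multiset.replicate (2 * k2) (4 * (k1 + k2) - d) +
    Multiset.replicate (2 * k1) (4 * (k1 + k2) - 1 - d) with hτ
  -- d is at most 4s - 1
  have hdmem : d ∈ τ := by
    rw [hτ]
    refine Multiset.mem_add.2 (Or.inl (Multiset.mem_add.2 (Or.inl (Multiset.mem_add.2
      (Or.inl ?_)))))
    exact Multiset.mem_replicate.2 ⟨by omega, rfl⟩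
  have hdle : d + 1 ≤ 4*s := by
    rw [← hG] at hdmem
    rw [degMultiset_eq_s12] at hdmem
    obtain ⟨v, _, hv⟩ := Multiset.mem_map.1 hdmem
    have := hdeglt v
    omega
  have hdge : 2*s + 1 ≤ d := by omega
  set E : ℕ := d - 2*s with hEdef
  have hE : 1 ≤ E := by omega
  have hdE : d = 2*s + E := by omega
  have hd1E : d - 1 + 1 = 2*s + E := by omega
  have h3E : (4*(k1+k2) - d) + E = 2*s := by omega
  have h4E : (4*(k1+k2) - 1 - d) + E + 1 = 2*s := by omega
  -- counts of the four values
  have hc1 : Multiset.count d τ = 2*k1 := by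
    rw [hτ, Multiset.count_add, Multiset.count_add, Multiset.count_add,
      Multiset.count_replicate, Multiset.count_replicate, Multiset.count_replicate,
      Multiset.count_replicate]
    rw [if_pos rfl, if_neg (by omega), if_neg (by omega), if_neg (by omega)]
    omega
  have hc2 : Multiset.count (d-1) τ = 2*k2 := by
    rw [hτ, Multiset.count_add, Multiset.count_add, Multiset.count_add,
      Multiset.count_replicate, Multiset.count_replicate, Multiset.count_replicate,
      Multiset.count_replicate]
    rw [if_neg (by omega), if_pos rfl, if_neg (by omega), if_neg (by omega)]
    omega
  -- the four values are classified by comparison with 2s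
  have hclass : ∀ v : V, (2*s ≤ G.degree v ↔ (G.degree v = d ∨ G.degree v = d - 1)) := by
    intro v
    have hv : G.degree v ∈ τ := by
      rw [← hG, degMultiset_eq_s12]
      exact Multiset.mem_map.2 ⟨v, Finset.mem_univ v, rfl⟩
    rw [hτ] at hv
    simp only [Multiset.mem_add, Multiset.mem_replicate] at hv
    constructor
    · intro hge
      rcases hv with ((⟨_, h⟩ | ⟨_, h⟩) | ⟨_, h⟩) | ⟨_, h⟩ <;> omega
    · intro h; omega
  set A : Finset V := Finset.univ.filter (fun v => 2*s ≤ G.degree v) with hA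
  have hAfil : A = (Finset.univ.filter fun v : V => G.degree v = d)
      ∪ (Finset.univ.filter fun v : V => G.degree v = d - 1) := by
    rw [hA, ← Finset.filter_or]
    exact Finset.filter_congr (fun v _ => hclass v)
  have hAcard : A.card = 2*s := by
    rw [hAfil, Finset.card_union_of_disjoint, hcount, hcount, hG, hc1, hc2]
    · omega
    · rw [Finset.disjoint_filter]
      intro v _ h1 h2
      omega
  have hBcard : (Aᶜ : Finset V).card = 2*s := by
    rw [Finset.card_compl, hV, hAcard]
    omega
  have hdegA : ∀ a ∈ A, G.degree a = 2*s+E ∨ G.degree a + 1 = 2*s+E := by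
    intro a ha
    rw [hA, Finset.mem_filter] at ha
    rcases (hclass a).1 ha.2 with h | h <;> omega
  have hdegB : ∀ b ∈ (Aᶜ : Finset V), G.degree b + E = 2*s ∨ G.degree b + E + 1 = 2*s := by
    intro b hb
    rw [Finset.mem_compl, hA, Finset.mem_filter] at hb
    have hb2 : ¬ (2*s ≤ G.degree b) := fun h => hb ⟨Finset.mem_univ b, h⟩
    have hv : G.degree b ∈ τ := by
      rw [← hG, degMultiset_eq_s12]
      exact Multiset.mem_map.2 ⟨b, Finset.mem_univ b, rfl⟩
    rw [hτ] at hv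
    simp only [Multiset.mem_add, Multiset.mem_replicate] at hv
    rcases hv with ((⟨_, h⟩ | ⟨_, h⟩) | ⟨_, h⟩) | ⟨_, h⟩ <;> omega
  have hhighA : (A.filter fun a => G.degree a = 2*s+E) =
      (Finset.univ.filter fun v : V => G.degree v = d) := by
    rw [hA, Finset.filter_filter]
    refine Finset.filter_congr (fun v _ => ?_)
    rw [hdE]
    exact ⟨fun h => h.2, fun h => ⟨by omega, h⟩⟩
  have hhigh2 : 2 ≤ (A.filter fun a => G.degree a = 2*s+E).card := by
    rw [hhighA, hcount, hG, hc1]; omega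
  have hhigh2' : (A.filter fun a => G.degree a = 2*s+E).card + 2 ≤ 2*s := by
    rw [hhighA, hcount, hG, hc1]; omega
  have ht : crossCount G A = 2*s*s := by
    rw [hA]
    exact crossCount_of_selfCompl G s hV (by rw [← hA]; exact hAcard) hsc
  obtain ⟨u, v, x, y, huv, hxy, hux, hvy, hne_ux, hne_vy, hcase⟩ :=
    core_switch G s E hs hE A hAcard hBcard hdegA hdegB hhigh2 hhigh2' ht
  have hdists : u ≠ y ∧ v ≠ x := by
    rcases hcase with ⟨hu, hx, hv, hy⟩ | ⟨hu, hv, hx, hy⟩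
    · exact ⟨fun h => hy (h ▸ hu), fun h => hv (h ▸ hx)⟩
    · exact ⟨fun h => hy (h ▸ hu), fun h => hx (h.symm ▸ hv)⟩
  obtain ⟨hne_uy, hne_vx⟩ := hdists
  refine ⟨switched G u v x y, ?_, ?_⟩
  · rw [switched_degMultiset G u v x y huv hxy hux hvy hne_ux hne_uy hne_vx hne_vy, hG]
  · intro hsc'
    letI : DecidableRel (switched G u v x y).Adj := switched_decAdj G u v x y
    have hdegEq : ∀ z, (switched G u v x y).degree z = G.degree z :=
      switched_degree G u v x y huv hxy hux hvy hne_ux hne_uy hne_vx hne_vy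
    have hA' : (Finset.univ.filter fun w : V => 2*s ≤ (switched G u v x y).degree w) = A := by
      rw [hA]
      exact Finset.filter_congr (fun w _ => by rw [hdegEq])
    have ht' := crossCount_of_selfCompl (switched G u v x y) s hV
      (by rw [hA']; exact hAcard) hsc'
    rw [hA'] at ht'
    rcases hcase with ⟨hu, hx, hv, hy⟩ | ⟨hu, hv, hx, hy⟩
    · have := crossCount_switched_minus G u v x y huv hxy hux hvy hne_ux hne_uy hne_vx hne_vy
        A hu hx hv hy
      omega
    · have := crossCount_switched_plus G u v x y huv hxy hux hvy hne_ux hne_uy hne_vx hne_vy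
        A hu hv hx hy
      omega


end Core

/-- Let `k1, k2 > 0`, `n = 4(k1 + k2)`, and let `d` satisfy
`d - 1 > n - d`.  If the degree sequence
`(d^{2k1}, (d-1)^{2k2}, (n-d)^{2k2}, (n-1-d)^{2k1})` has at least one realization,
then it has a realization that is not self-complementary. -/
theorem four_degrees_not_forcibly (k1 k2 d : ℕ) (hk1 : 0 < k1) (hk2 : 0 < k2)
    (hd : 4 * (k1 + k2) - d < d - 1) :
    (∃ G : SimpleGraph (Fin (Multiset.card
        (Multiset.replicate (2 * k1) d + Multiset.replicate (2 * k2) (d - 1) +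
         Multiset.replicate (2 * k2) (4 * (k1 + k2) - d) +
         Multiset.replicate (2 * k1) (4 * (k1 + k2) - 1 - d)))),
      degMultiset G =
        Multiset.replicate (2 * k1) d + Multiset.replicate (2 * k2) (d - 1) +
        Multiset.replicate (2 * k2) (4 * (k1 + k2) - d) +
        Multiset.replicate (2 * k1) (4 * (k1 + k2) - 1 - d)) →
    ∃ G : SimpleGraph (Fin (Multiset.card
        (Multiset.replicate (2 * k1) d + Multiset.replicate (2 * k2) (d - 1) +
         Multiset.replicate (2 * k2) (4 * (k1 + k2) - d) +
         Multiset.replicate (2 * k1) (4 * (k1 + k2) - 1 - d)))),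
      degMultiset G =
        Multiset.replicate (2 * k1) d + Multiset.replicate (2 * k2) (d - 1) +
        Multiset.replicate (2 * k2) (4 * (k1 + k2) - d) +
        Multiset.replicate (2 * k1) (4 * (k1 + k2) - 1 - d) ∧
      ¬ IsSelfCompl G := by
  intro hex
  obtain ⟨G, hG⟩ := hex
  have hV : Fintype.card (Fin (Multiset.card
      (Multiset.replicate (2 * k1) d + Multiset.replicate (2 * k2) (d - 1) +
       Multiset.replicate (2 * k2) (4 * (k1 + k2) - d) +
       Multiset.replicate (2 * k1) (4 * (k1 + k2) - 1 - d)))) = 4*(k1+k2) := by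
    simp only [Fintype.card_fin, Multiset.card_add, Multiset.card_replicate]
    omega
  obtain ⟨G', h1, h2⟩ := main_aux k1 k2 d hk1 hk2 hd hV G hG
  exact ⟨G', h1, h2⟩
end

section
/- Let G be a graph with l distinct vertex degrees whose degree sequence is forcibly self-complementary, and let i be an index in {1, ..., l} with i != (l+1)/2. If G' is a graph obtained from G by a single 2-switch, then G' has the same number of edges inside V_i union V_{l+1-i} as G, and the same number of edges between V_i and V_{l+1-i} as G. -/
open SimpleGraph

/-- `G'` is obtained from `G` by a single 2-switch
`(v1 v2, v3 v4) → (v1 v3, v2 v4)`. -/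
def TwoSwitch {V : Type*} (G G' : SimpleGraph V) : Prop :=
  ∃ v1 v2 v3 v4 : V, v1 ≠ v3 ∧ v2 ≠ v4 ∧
    G.Adj v1 v2 ∧ G.Adj v3 v4 ∧ ¬ G.Adj v1 v3 ∧ ¬ G.Adj v2 v4 ∧
    G' = SimpleGraph.fromEdgeSet
      ((G.edgeSet \ {s(v1, v2), s(v3, v4)}) ∪ {s(v1, v3), s(v2, v4)})

section Helpers

variable {V : Type*} {W : Type*}

lemma deg_compl_add [Finite V] (G : SimpleGraph V) (v : V) :
    deg G v + deg Gᶜ v = Nat.card V - 1 := by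
  have h1 : G.neighborSet v ∪ Gᶜ.neighborSet v = {v}ᶜ := by
    ext w
    simp only [Set.mem_union, mem_neighborSet, compl_adj, Set.mem_compl_iff,
      Set.mem_singleton_iff]
    constructor
    · rintro (h | ⟨h, -⟩)
      · exact fun hw => G.irrefl (hw ▸ h)
      · exact fun hw => h hw.symm
    · intro h
      by_cases hA : G.Adj v w
      · exact Or.inl hA
      · exact Or.inr ⟨fun hv => h hv.symm, hA⟩
  have h2 : Disjoint (G.neighborSet v) (Gᶜ.neighborSet v) := by
    rw [Set.disjoint_left]
    rintro w hw ⟨-, hw2⟩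
    exact hw2 hw
  have h3 : ({v}ᶜ : Set V).ncard = Nat.card V - 1 := by
    have := Set.ncard_add_ncard_compl ({v} : Set V) (Set.toFinite _) (Set.toFinite _)
    have hv : ({v} : Set V).ncard = 1 := Set.ncard_singleton v
    omega
  rw [deg, deg, ← Set.ncard_union_eq h2 (Set.toFinite _) (Set.toFinite _), h1, h3]

lemma deg_le [Finite V] (G : SimpleGraph V) (v : V) : deg G v ≤ Nat.card V - 1 := by
  have := deg_compl_add G v
  omega

lemma deg_iso {G : SimpleGraph V} {H : SimpleGraph W} (φ : G ≃g H) (v : V) :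
    deg H (φ v) = deg G v := by
  rw [deg, deg, ← Nat.card_coe_set_eq, ← Nat.card_coe_set_eq]
  exact Nat.card_congr (φ.mapNeighborSet v).symm

/-- An isomorphism of graphs induces an isomorphism of complements. -/
def complIso {G : SimpleGraph V} {H : SimpleGraph W} (φ : G ≃g H) : Gᶜ ≃g Hᶜ where
  toEquiv := φ.toEquiv
  map_rel_iff' := by
    intro a b
    show Hᶜ.Adj (φ a) (φ b) ↔ Gᶜ.Adj a b
    rw [compl_adj, compl_adj, φ.map_rel_iff, (EquivLike.injective φ).ne_iff]

lemma degMultiset_iso [Finite V] [Finite W] {G : SimpleGraph V} {H : SimpleGraph W}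
    (φ : G ≃g H) : degMultiset G = degMultiset H := by
  letI := Fintype.ofFinite V
  letI := Fintype.ofFinite W
  show Finset.univ.val.map (fun v => deg G v) = Finset.univ.val.map (fun w => deg H w)
  have h1 : (Finset.univ.val.map (fun v => deg G v)) =
      (Finset.univ.val.map (fun v : V => deg H (φ v))) :=
    Multiset.map_congr rfl (fun v _ => (deg_iso φ v).symm)
  rw [h1]
  have h2 : (Finset.univ.val.map (fun v : V => deg H (φ v))) =
      ((Finset.univ.val.map (fun v : V => φ v)).map (fun w => deg H w)) := by
    rw [Multiset.map_map]; rfl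
  rw [h2]
  congr 1
  have h3 : (Finset.univ.map φ.toEquiv.toEmbedding) = (Finset.univ : Finset W) :=
    Finset.map_univ_equiv φ.toEquiv
  calc Finset.univ.val.map (fun v : V => φ v)
      = (Finset.univ.map φ.toEquiv.toEmbedding).val := by rw [Finset.map_val]; rfl
    _ = (Finset.univ : Finset W).val := by rw [h3]

lemma isSelfCompl_of_forc [Finite V] {G : SimpleGraph V}
    (hforc : ForciblySC (degMultiset G)) (H : SimpleGraph V)
    (hH : degMultiset H = degMultiset G) : IsSelfCompl H := by
  letI := Fintype.ofFinite V
  have hc : Fintype.card V = Multiset.card (degMultiset G) := by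
    show Fintype.card V = Multiset.card (Finset.univ.val.map fun v => deg G v)
    rw [Multiset.card_map]
    rfl
  let e : V ≃ Fin (Multiset.card (degMultiset G)) := Fintype.equivFinOfCardEq hc
  let K := H.comap ⇑e.symm
  have iso : K ≃g H := SimpleGraph.Iso.comap e.symm H
  have hKm : degMultiset K = degMultiset G := (degMultiset_iso iso).trans hH
  obtain ⟨ψ⟩ := hforc K hKm
  exact ⟨(iso.symm.trans ψ).trans (complIso iso)⟩

end Helpers

section TwoSwitchDeg

variable {V : Type*} [Finite V]

private lemma ts_deg_v1 {G : SimpleGraph V} {v1 v2 v3 v4 : V}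
    (h13 : v1 ≠ v3) (h24 : v2 ≠ v4)
    (a12 : G.Adj v1 v2) (a34 : G.Adj v3 v4)
    (n13 : ¬ G.Adj v1 v3) (n24 : ¬ G.Adj v2 v4) :
    deg (SimpleGraph.fromEdgeSet
      ((G.edgeSet \ {s(v1, v2), s(v3, v4)}) ∪ {s(v1, v3), s(v2, v4)})) v1 = deg G v1 := by
  have h12 : v1 ≠ v2 := a12.ne
  have h14 : v1 ≠ v4 := fun h => n24 (h ▸ a12.symm)
  set G2 := SimpleGraph.fromEdgeSet
      ((G.edgeSet \ {s(v1, v2), s(v3, v4)}) ∪ {s(v1, v3), s(v2, v4)}) with hG2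
  have hN : G2.neighborSet v1 = insert v3 (G.neighborSet v1 \ {v2}) := by
    ext w
    have hvw : G.Adj v1 w → v1 ≠ w := fun h => h.ne
    have h13w : w = v3 → v1 ≠ w := fun h => h ▸ h13
    simp only [mem_neighborSet, hG2, fromEdgeSet_adj, Set.mem_union, Set.mem_diff,
      Set.mem_insert_iff, Set.mem_singleton_iff, Sym2.eq_iff, mem_edgeSet]
    tauto
  have hv3 : v3 ∉ G.neighborSet v1 \ {v2} := fun h => n13 h.1
  have hv2 : v2 ∈ G.neighborSet v1 := a12
  rw [deg, hN, Set.ncard_insert_of_notMem hv3 (Set.toFinite _),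
    Set.ncard_diff_singleton_add_one hv2 (Set.toFinite _)]
  rfl

private lemma ts_deg_other {G : SimpleGraph V} {v1 v2 v3 v4 v : V}
    (hv1 : v ≠ v1) (hv2 : v ≠ v2) (hv3 : v ≠ v3) (hv4 : v ≠ v4) :
    deg (SimpleGraph.fromEdgeSet
      ((G.edgeSet \ {s(v1, v2), s(v3, v4)}) ∪ {s(v1, v3), s(v2, v4)})) v = deg G v := by
  have hN : (SimpleGraph.fromEdgeSet
      ((G.edgeSet \ {s(v1, v2), s(v3, v4)}) ∪ {s(v1, v3), s(v2, v4)})).neighborSet v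
      = G.neighborSet v := by
    ext w
    have hvw : G.Adj v w → v ≠ w := fun h => h.ne
    simp only [mem_neighborSet, fromEdgeSet_adj, Set.mem_union, Set.mem_diff,
      Set.mem_singleton_iff, Sym2.eq_iff, mem_edgeSet, Set.mem_insert_iff]
    tauto
  rw [deg, hN, deg]

lemma twoSwitch_deg {G G' : SimpleGraph V} (hsw : TwoSwitch G G') :
    ∀ v, deg G' v = deg G v := by
  obtain ⟨v1, v2, v3, v4, h13, h24, a12, a34, n13, n24, rfl⟩ := hsw
  have h12 : v1 ≠ v2 := a12.ne
  have h34 : v3 ≠ v4 := a34.ne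
  have h14 : v1 ≠ v4 := fun h => n24 (h ▸ a12.symm)
  have h23 : v2 ≠ v3 := fun h => n24 (h ▸ a34)
  intro v
  by_cases hv1 : v = v1
  · rw [hv1]; exact ts_deg_v1 h13 h24 a12 a34 n13 n24
  by_cases hv2 : v = v2
  · rw [hv2]
    have key := ts_deg_v1 (G := G) (v1 := v2) (v2 := v1) (v3 := v4) (v4 := v3)
      h24 h13 a12.symm a34.symm n24 n13
    have hset : ((G.edgeSet \ {s(v2, v1), s(v4, v3)}) ∪ {s(v2, v4), s(v1, v3)})
        = ((G.edgeSet \ {s(v1, v2), s(v3, v4)}) ∪ {s(v1, v3), s(v2, v4)}) := by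
      rw [Sym2.eq_swap (a := v2) (b := v1), Sym2.eq_swap (a := v4) (b := v3),
        Set.pair_comm (s(v2, v4)) (s(v1, v3))]
    rwa [hset] at key
  by_cases hv3 : v = v3
  · rw [hv3]
    have key := ts_deg_v1 (G := G) (v1 := v3) (v2 := v4) (v3 := v1) (v4 := v2)
      (Ne.symm h13) (Ne.symm h24) a34 a12 (fun h => n13 h.symm) (fun h => n24 h.symm)
    have hset : ((G.edgeSet \ {s(v3, v4), s(v1, v2)}) ∪ {s(v3, v1), s(v4, v2)})
        = ((G.edgeSet \ {s(v1, v2), s(v3, v4)}) ∪ {s(v1, v3), s(v2, v4)}) := by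
      rw [Set.pair_comm (s(v3, v4)) (s(v1, v2)), Sym2.eq_swap (a := v3) (b := v1),
        Sym2.eq_swap (a := v4) (b := v2)]
    rwa [hset] at key
  by_cases hv4 : v = v4
  · rw [hv4]
    have key := ts_deg_v1 (G := G) (v1 := v4) (v2 := v3) (v3 := v2) (v4 := v1)
      (Ne.symm h24) (Ne.symm h13) a34.symm a12.symm (fun h => n24 h.symm) (fun h => n13 h.symm)
    have hset : ((G.edgeSet \ {s(v4, v3), s(v2, v1)}) ∪ {s(v4, v2), s(v3, v1)})
        = ((G.edgeSet \ {s(v1, v2), s(v3, v4)}) ∪ {s(v1, v3), s(v2, v4)}) := by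
      rw [Sym2.eq_swap (a := v4) (b := v3), Sym2.eq_swap (a := v2) (b := v1),
        Sym2.eq_swap (a := v4) (b := v2), Sym2.eq_swap (a := v3) (b := v1),
        Set.pair_comm (s(v2, v4)) (s(v1, v3)), Set.pair_comm (s(v3, v4)) (s(v1, v2)),
        Set.pair_comm (s(v1, v2)) (s(v3, v4))]
    rwa [hset] at key
  · exact ts_deg_other hv1 hv2 hv3 hv4

end TwoSwitchDeg

section Counting

variable {V : Type*} [Finite V]

lemma count_inside (H : SimpleGraph V) (φ : H ≃g Hᶜ) (S : Set V)
    (hS : ∀ v ∈ S, φ v ∈ S) (hS' : ∀ v ∈ S, φ.symm v ∈ S) :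
    2 * (H.induce S).edgeSet.ncard = {e : Sym2 ↥S | ¬ e.IsDiag}.ncard := by
  classical
  let ε : ↥S ≃ ↥S :=
    { toFun := fun v => ⟨φ v, hS v v.2⟩
      invFun := fun v => ⟨φ.symm v, hS' v v.2⟩
      left_inv := fun v => Subtype.ext (φ.toEquiv.symm_apply_apply v)
      right_inv := fun v => Subtype.ext (φ.toEquiv.apply_symm_apply v) }
  have key : Sym2.map ⇑ε '' (H.induce S).edgeSet = (Hᶜ.induce S).edgeSet := by
    ext e
    constructor
    · rintro ⟨e', he', rfl⟩
      revert he'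
      refine Sym2.ind (fun u w => ?_) e'
      intro h
      rw [mem_edgeSet] at h
      rw [Sym2.map_pair_eq, mem_edgeSet]
      show Hᶜ.Adj (φ ↑u) (φ ↑w)
      exact φ.map_rel_iff.mpr h
    · intro he
      refine ⟨Sym2.map ⇑ε.symm e, ?_, ?_⟩
      · revert he
        refine Sym2.ind (fun u w => ?_) e
        intro h
        rw [mem_edgeSet] at h
        rw [Sym2.map_pair_eq, mem_edgeSet]
        show H.Adj (φ.symm ↑u) (φ.symm ↑w)
        exact φ.symm.map_rel_iff.mpr h
      · rw [Sym2.map_map]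
        have h0 : (⇑ε ∘ ⇑ε.symm) = id := funext fun x => ε.apply_symm_apply x
        rw [h0, Sym2.map_id, id_eq]
  have hcard1 : (H.induce S).edgeSet.ncard = (Hᶜ.induce S).edgeSet.ncard := by
    rw [← key, Set.ncard_image_of_injective _ (Sym2.map.injective ε.injective)]
  have hdisj : Disjoint (H.induce S).edgeSet (Hᶜ.induce S).edgeSet := by
    rw [Set.disjoint_left]
    intro e
    refine Sym2.ind (fun u w => ?_) e
    rw [mem_edgeSet, mem_edgeSet]
    simp only [comap_adj, compl_adj]
    rintro h ⟨-, h2⟩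
    exact h2 h
  have hpart : (H.induce S).edgeSet ∪ (Hᶜ.induce S).edgeSet = {e : Sym2 ↥S | ¬ e.IsDiag} := by
    ext e
    refine Sym2.ind (fun u w => ?_) e
    simp only [Set.mem_union, mem_edgeSet, comap_adj, compl_adj, Set.mem_setOf_eq,
      Sym2.isDiag_iff_proj_eq]
    constructor
    · rintro (h | ⟨h, -⟩)
      · intro hw
        cases hw
        exact H.irrefl h
      · exact fun hw => h (congrArg Subtype.val hw)
    · intro h
      by_cases hA : H.Adj (u : V) (w : V)
      · exact Or.inl hA
      · exact Or.inr ⟨fun hv => h (Subtype.ext hv), hA⟩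
  calc 2 * (H.induce S).edgeSet.ncard
      = (H.induce S).edgeSet.ncard + (Hᶜ.induce S).edgeSet.ncard := by omega
    _ = ((H.induce S).edgeSet ∪ (Hᶜ.induce S).edgeSet).ncard :=
        (Set.ncard_union_eq hdisj (Set.toFinite _) (Set.toFinite _)).symm
    _ = {e : Sym2 ↥S | ¬ e.IsDiag}.ncard := by rw [hpart]

lemma count_cross (H : SimpleGraph V) (φ : H ≃g Hᶜ) (A B : Set V)
    (hAB : Disjoint A B)
    (hA : ∀ v ∈ A, φ v ∈ B) (hB : ∀ v ∈ B, φ v ∈ A)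
    (hA' : ∀ v ∈ A, φ.symm v ∈ B) (hB' : ∀ v ∈ B, φ.symm v ∈ A) :
    2 * {e : Sym2 V | e ∈ H.edgeSet ∧ ∃ a ∈ A, ∃ b ∈ B, e = s(a, b)}.ncard =
      {e : Sym2 V | ∃ a ∈ A, ∃ b ∈ B, e = s(a, b)}.ncard := by
  classical
  set X : SimpleGraph V → Set (Sym2 V) :=
    fun K => {e : Sym2 V | e ∈ K.edgeSet ∧ ∃ a ∈ A, ∃ b ∈ B, e = s(a, b)} with hX
  have key : Sym2.map ⇑φ '' X H = X Hᶜ := by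
    ext e
    constructor
    · rintro ⟨e', ⟨he', a, ha, b, hb, rfl⟩, rfl⟩
      rw [Sym2.map_pair_eq]
      refine ⟨?_, φ b, hB b hb, φ a, hA a ha, Sym2.eq_swap⟩
      rw [mem_edgeSet] at *
      exact φ.map_rel_iff.mpr he'
    · rintro ⟨he, a, ha, b, hb, rfl⟩
      refine ⟨s(φ.symm a, φ.symm b), ⟨?_, φ.symm b, hB' b hb, φ.symm a, hA' a ha,
        Sym2.eq_swap⟩, ?_⟩
      · rw [mem_edgeSet] at *
        exact φ.symm.map_rel_iff.mpr he
      · rw [Sym2.map_pair_eq]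
        show s(φ (φ.symm a), φ (φ.symm b)) = s(a, b)
        rw [RelIso.apply_symm_apply, RelIso.apply_symm_apply]
  have hcard1 : (X H).ncard = (X Hᶜ).ncard := by
    have hinj : Function.Injective (⇑φ) := fun a b h => φ.toEquiv.injective h
    rw [← key, Set.ncard_image_of_injective _ (Sym2.map.injective hinj)]
  have hdisj : Disjoint (X H) (X Hᶜ) := by
    rw [Set.disjoint_left]
    rintro e ⟨he, -⟩ ⟨he2, -⟩
    revert he he2
    refine Sym2.ind (fun u w => ?_) e
    rw [mem_edgeSet, mem_edgeSet, compl_adj]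
    rintro h ⟨-, h2⟩
    exact h2 h
  have hpart : X H ∪ X Hᶜ = {e : Sym2 V | ∃ a ∈ A, ∃ b ∈ B, e = s(a, b)} := by
    ext e
    constructor
    · rintro (⟨-, h⟩ | ⟨-, h⟩) <;> exact h
    · rintro ⟨a, ha, b, hb, rfl⟩
      have hab : a ≠ b := fun h => (Set.disjoint_left.mp hAB ha) (h ▸ hb)
      by_cases hAd : H.Adj a b
      · exact Or.inl ⟨hAd, a, ha, b, hb, rfl⟩
      · refine Or.inr ⟨?_, a, ha, b, hb, rfl⟩
        rw [mem_edgeSet, compl_adj]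
        exact ⟨hab, hAd⟩
  calc 2 * (X H).ncard = (X H).ncard + (X Hᶜ).ncard := by omega
    _ = (X H ∪ X Hᶜ).ncard :=
        (Set.ncard_union_eq hdisj (Set.toFinite _) (Set.toFinite _)).symm
    _ = {e : Sym2 V | ∃ a ∈ A, ∃ b ∈ B, e = s(a, b)}.ncard := by rw [hpart]

end Counting

/-- Let `G` be a graph with `l` distinct vertex degrees
`d 0 > ... > d (l-1)` whose degree sequence is forcibly self-complementary, and let
`i` be an index (0-based `i`, so 1-based `i + 1`) with `i + 1 ≠ (l+1)/2`, i.e.,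
`2 * (i + 1) ≠ l + 1`.  If `G'` is obtained from `G` by a single 2-switch, then `G'`
has the same number of edges inside `V_i ∪ V_{l+1-i}` as `G`, and the same number
of edges between `V_i` and `V_{l+1-i}` as `G`. -/
theorem two_switch_preserves_slice_edges {V : Type*} [Finite V]
    (G G' : SimpleGraph V) (l : ℕ) (d : Fin l → ℕ) (hd : StrictAnti d)
    (hdeg : ∀ v, ∃ i, deg G v = d i) (hattain : ∀ i, ∃ v, deg G v = d i)
    (hforc : ForciblySC (degMultiset G))
    (i : Fin l) (hi : 2 * ((i : ℕ) + 1) ≠ l + 1)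
    (hsw : TwoSwitch G G') :
    (G'.induce ({v | deg G v = d i} ∪ {v | deg G v = d i.rev})).edgeSet.ncard =
      (G.induce ({v | deg G v = d i} ∪ {v | deg G v = d i.rev})).edgeSet.ncard ∧
    {e : Sym2 V | e ∈ G'.edgeSet ∧
        ∃ a ∈ {v | deg G v = d i}, ∃ b ∈ {v | deg G v = d i.rev}, e = s(a, b)}.ncard =
      {e : Sym2 V | e ∈ G.edgeSet ∧
        ∃ a ∈ {v | deg G v = d i}, ∃ b ∈ {v | deg G v = d i.rev}, e = s(a, b)}.ncard := by
  classical
  letI := Fintype.ofFinite V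
  set n := Nat.card V with hn
  -- degrees are bounded
  have hnd : ∀ j : Fin l, d j ≤ n - 1 := by
    intro j
    obtain ⟨v, hv⟩ := hattain j
    rw [← hv]
    exact deg_le G v
  -- G is self-complementary
  obtain ⟨φG⟩ := isSelfCompl_of_forc hforc G rfl
  -- the degree list is symmetric: d j.rev = n - 1 - d j
  have hex : ∀ j : Fin l, ∃ k, d k = n - 1 - d j := by
    intro j
    obtain ⟨v, hv⟩ := hattain j
    have h1 : deg Gᶜ (φG v) = deg G v := deg_iso φG v
    have h2 := deg_compl_add G (φG v)
    obtain ⟨k, hk⟩ := hdeg (φG v)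
    exact ⟨k, by omega⟩
  choose f hf using hex
  have hg : StrictMono (f ∘ Fin.rev) := by
    intro a b hab
    have h1 : Fin.rev b < Fin.rev a := Fin.rev_lt_rev.mpr hab
    have h2 : d (Fin.rev a) < d (Fin.rev b) := hd h1
    have h3 : d (f (Fin.rev a)) > d (f (Fin.rev b)) := by
      rw [hf, hf]
      have := hnd (Fin.rev a)
      have := hnd (Fin.rev b)
      omega
    exact hd.lt_iff_gt.mp h3
  have hgid : (f ∘ Fin.rev) = id := by
    have hsur : Function.Surjective (f ∘ Fin.rev) :=
      Finite.surjective_of_injective hg.injective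
    exact (hg.range_inj strictMono_id).mp
      (by rw [Set.range_id, Set.range_eq_univ]; exact hsur)
  have hrev : ∀ j : Fin l, d (Fin.rev j) = n - 1 - d j := by
    intro j
    have h1 : f (Fin.rev j) = j := congrFun hgid j
    have h2 : f j = Fin.rev j := by
      have := congrFun hgid (Fin.rev j)
      simpa [Fin.rev_rev] using this
    rw [← h2, hf]
  -- i and its reverse are distinct classes
  have hir : i ≠ i.rev := by
    intro h
    have h1 : (i : ℕ) = (i.rev : ℕ) := congrArg Fin.val h
    rw [Fin.val_rev] at h1
    have := i.isLt
    omega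
  have hdne : d i ≠ d i.rev := fun h => hir (hd.injective h)
  -- the two degree classes
  set A : Set V := {v | deg G v = d i} with hA
  set B : Set V := {v | deg G v = d i.rev} with hB
  have hABd : Disjoint A B := by
    rw [Set.disjoint_left]
    intro v hv1 hv2
    exact hdne (hv1 ▸ hv2 : d i = d i.rev)
  -- degrees are preserved by the 2-switch
  have hdG' : ∀ v, deg G' v = deg G v := twoSwitch_deg hsw
  have hmult : degMultiset G' = degMultiset G := by
    show Finset.univ.val.map (fun v => deg G' v) = Finset.univ.val.map (fun v => deg G v)
    exact Multiset.map_congr rfl (fun v _ => hdG' v)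
  obtain ⟨φG'⟩ := isSelfCompl_of_forc hforc G' hmult
  -- class-mapping facts, uniformly for both graphs
  have main : ∀ (H : SimpleGraph V) (φ : H ≃g Hᶜ), (∀ v, deg H v = deg G v) →
      (2 * (H.induce (A ∪ B)).edgeSet.ncard = {e : Sym2 ↥(A ∪ B) | ¬ e.IsDiag}.ncard ∧
       2 * {e : Sym2 V | e ∈ H.edgeSet ∧ ∃ a ∈ A, ∃ b ∈ B, e = s(a, b)}.ncard =
         {e : Sym2 V | ∃ a ∈ A, ∃ b ∈ B, e = s(a, b)}.ncard) := by
    intro H φ hdH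
    have hAmem : ∀ v ∈ A, φ v ∈ B := by
      intro v hv
      have h1 : deg Hᶜ (φ v) = deg H v := deg_iso φ v
      have h2 := deg_compl_add H (φ v)
      have h3 : deg G (φ v) = d i.rev := by
        rw [← hdH (φ v)]
        have hv' : deg H v = d i := (hdH v).trans hv
        have := hnd i
        have := hrev i
        omega
      exact h3
    have hBmem : ∀ v ∈ B, φ v ∈ A := by
      intro v hv
      have h1 : deg Hᶜ (φ v) = deg H v := deg_iso φ v
      have h2 := deg_compl_add H (φ v)
      have h3 : deg G (φ v) = d i := by
        rw [← hdH (φ v)]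
        have hv' : deg H v = d i.rev := (hdH v).trans hv
        have h4 := hnd i
        have h5 := hnd i.rev
        have h6 := hrev i
        omega
      exact h3
    have hAmem' : ∀ v ∈ A, φ.symm v ∈ B := by
      intro v hv
      have h1 : deg H (φ.symm v) = deg Hᶜ v := deg_iso φ.symm v
      have h2 := deg_compl_add H v
      have h3 : deg G (φ.symm v) = d i.rev := by
        rw [← hdH (φ.symm v)]
        have hv' : deg H v = d i := (hdH v).trans hv
        have := hnd i
        have := hrev i
        omega
      exact h3
    have hBmem' : ∀ v ∈ B, φ.symm v ∈ A := by
      intro v hv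
      have h1 : deg H (φ.symm v) = deg Hᶜ v := deg_iso φ.symm v
      have h2 := deg_compl_add H v
      have h3 : deg G (φ.symm v) = d i := by
        rw [← hdH (φ.symm v)]
        have hv' : deg H v = d i.rev := (hdH v).trans hv
        have h4 := hnd i
        have h5 := hnd i.rev
        have h6 := hrev i
        omega
      exact h3
    have hSmem : ∀ v ∈ A ∪ B, φ v ∈ A ∪ B := by
      rintro v (hv | hv)
      · exact Or.inr (hAmem v hv)
      · exact Or.inl (hBmem v hv)
    have hSmem' : ∀ v ∈ A ∪ B, φ.symm v ∈ A ∪ B := by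
      rintro v (hv | hv)
      · exact Or.inr (hAmem' v hv)
      · exact Or.inl (hBmem' v hv)
    exact ⟨count_inside H φ (A ∪ B) hSmem hSmem',
      count_cross H φ A B hABd hAmem hBmem hAmem' hBmem'⟩
  obtain ⟨hin1, hcr1⟩ := main G φG (fun _ => rfl)
  obtain ⟨hin2, hcr2⟩ := main G' φG' hdG'
  constructor
  · omega
  · omega
end
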